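/- arXiv:math/0612445 — 5 statements merged into one kernel-verified Lean document; each statement's English description precedes it below -/
import Mathlib

section
/- Let (a_ε)_{ε∈(0,1]} and (b_ε)_{ε∈(0,1]} be moderate nets of smooth functions on ℝ which satisfy the G^∞-estimate on ℝ∖{0}: for every compact set K ⊂ ℝ∖{0} there exists p ≥ 0 such that for every integer k ≥ 0, sup_{x∈K} |a_ε^{(k)}(x)| = O(ε^{−p}) and sup_{x∈K} |b_ε^{(k)}(x)| = O(ε^{−p}) as ε → 0. Define v_ε(x,t) = ½(a_ε(x−t) + a_ε(x+t)) + ½∫_{x−t}^{x+t} b_ε(y)dy. Then (v_ε) satisfies the G^∞-estimate on ℝ²∖S, where S = {(x,t) ∈ ℝ² : |x| = |t|}: for every compact set K ⊂ ℝ²∖S there exists p ≥ 0 such that for every multi-index α, sup_{(x,t)∈K} |∂^α v_ε(x,t)| = O(ε^{−p}) as ε → 0. -/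
open Real Set Filter MeasureTheory Topology

noncomputable section

/-- A moderate net of smooth functions. -/
def ModerateNet {E : Type*} [NormedAddCommGroup E] [NormedSpace ℝ E]
    (u : ℝ → E → ℝ) : Prop :=
  (∀ ε ∈ Set.Ioc (0:ℝ) 1, ContDiff ℝ (⊤ : ℕ∞) (u ε)) ∧
  ∀ K : Set E, IsCompact K → ∀ k : ℕ, ∃ p : ℝ, 0 ≤ p ∧ ∃ C : ℝ, 0 < C ∧ ∃ ε₀ : ℝ, 0 < ε₀ ∧
    ∀ ε ∈ Set.Ioc (0:ℝ) 1, ε ≤ ε₀ → ∀ x ∈ K,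
      ‖iteratedFDeriv ℝ k (u ε) x‖ ≤ C * ε ^ (-p)

/-- The `G^∞`-estimate on an open set `Ω ⊆ ℝ²`: on each compact subset a single
exponent `p` controls all derivatives. -/
def GInfEstimateOn (Ω : Set (ℝ × ℝ)) (v : ℝ → ℝ × ℝ → ℝ) : Prop :=
  ∀ K : Set (ℝ × ℝ), K ⊆ Ω → IsCompact K → ∃ p : ℝ, 0 ≤ p ∧ ∀ k : ℕ,
    ∃ C : ℝ, 0 < C ∧ ∃ ε₀ : ℝ, 0 < ε₀ ∧ ∀ ε ∈ Set.Ioc (0:ℝ) 1, ε ≤ ε₀ →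
      ∀ q ∈ K, ‖iteratedFDeriv ℝ k (v ε) q‖ ≤ C * ε ^ (-p)

namespace LinearGInfAux

lemma primitive_hasDerivAt {b : ℝ → ℝ} (hb : Continuous b) (x : ℝ) :
    HasDerivAt (fun y => ∫ s in (0:ℝ)..y, b s) (b x) x :=
  (hb.integral_hasStrictDerivAt 0 x).hasDerivAt

lemma primitive_deriv {b : ℝ → ℝ} (hb : Continuous b) :
    deriv (fun y => ∫ s in (0:ℝ)..y, b s) = b :=
  funext fun x => (primitive_hasDerivAt hb x).deriv

lemma primitive_contDiff {b : ℝ → ℝ} (hb : ContDiff ℝ (⊤ : ℕ∞) b) :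
    ContDiff ℝ (⊤ : ℕ∞) (fun y => ∫ s in (0:ℝ)..y, b s) := by
  rw [contDiff_infty_iff_deriv]
  exact ⟨fun x => (primitive_hasDerivAt hb.continuous x).differentiableAt,
    by rw [primitive_deriv hb.continuous]; exact hb⟩

lemma primitive_iteratedDeriv_succ {b : ℝ → ℝ} (hb : Continuous b) (k : ℕ) :
    iteratedDeriv (k + 1) (fun y => ∫ s in (0:ℝ)..y, b s) = iteratedDeriv k b := by
  rw [iteratedDeriv_succ', primitive_deriv hb]

lemma comp_clm_bound {f : ℝ → ℝ} (hf : ContDiff ℝ (⊤ : ℕ∞) f)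
    (L : (ℝ × ℝ) →L[ℝ] ℝ) (hL : ‖L‖ ≤ 2) (k : ℕ) (q : ℝ × ℝ) :
    ‖iteratedFDeriv ℝ k (f ∘ L) q‖ ≤ 2 ^ k * ‖iteratedFDeriv ℝ k f (L q)‖ := by
  rw [L.iteratedFDeriv_comp_right hf q (by exact_mod_cast le_top)]
  refine (ContinuousMultilinearMap.norm_compContinuousLinearMap_le _ _).trans ?_
  rw [Finset.prod_const, Finset.card_univ, Fintype.card_fin, mul_comm]
  have := norm_nonneg (iteratedFDeriv ℝ k f (L q))
  gcongr

/-- The linear map `(x, t) ↦ x - t`. -/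
def Lm : (ℝ × ℝ) →L[ℝ] ℝ :=
  ContinuousLinearMap.fst ℝ ℝ ℝ - ContinuousLinearMap.snd ℝ ℝ ℝ

/-- The linear map `(x, t) ↦ x + t`. -/
def Lp : (ℝ × ℝ) →L[ℝ] ℝ :=
  ContinuousLinearMap.fst ℝ ℝ ℝ + ContinuousLinearMap.snd ℝ ℝ ℝ

@[simp] lemma Lm_apply (q : ℝ × ℝ) : Lm q = q.1 - q.2 := rfl
@[simp] lemma Lp_apply (q : ℝ × ℝ) : Lp q = q.1 + q.2 := rfl

lemma norm_Lm_le : ‖Lm‖ ≤ 2 := by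
  refine ContinuousLinearMap.opNorm_le_bound _ (by norm_num) fun q => ?_
  have h1 : ‖q.1‖ ≤ ‖q‖ := norm_fst_le q
  have h2 : ‖q.2‖ ≤ ‖q‖ := norm_snd_le q
  rw [Lm_apply, Real.norm_eq_abs]
  rw [Real.norm_eq_abs] at h1 h2
  calc |q.1 - q.2| ≤ |q.1| + |q.2| := abs_sub _ _
    _ ≤ 2 * ‖q‖ := by linarith

lemma norm_Lp_le : ‖Lp‖ ≤ 2 := by
  refine ContinuousLinearMap.opNorm_le_bound _ (by norm_num) fun q => ?_
  have h1 : ‖q.1‖ ≤ ‖q‖ := norm_fst_le q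
  have h2 : ‖q.2‖ ≤ ‖q‖ := norm_snd_le q
  rw [Lp_apply, Real.norm_eq_abs]
  rw [Real.norm_eq_abs] at h1 h2
  calc |q.1 + q.2| ≤ |q.1| + |q.2| := abs_add_le _ _
    _ ≤ 2 * ‖q‖ := by linarith

end LinearGInfAux

open LinearGInfAux

set_option maxHeartbeats 2000000 in
/-- Linear regularity: if the moderate initial data satisfy the `G^∞`-estimate
away from the origin, the d'Alembert solution of the linear wave equation
satisfies the `G^∞`-estimate off the light-cone `S = {|x| = |t|}`. -/
theorem linear_GInf_regularity
    (a b : ℝ → ℝ → ℝ) (ha : ModerateNet a) (hb : ModerateNet b)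
    (hGinf : ∀ K : Set ℝ, K ⊆ {x : ℝ | x ≠ 0} → IsCompact K →
      ∃ p : ℝ, 0 ≤ p ∧ ∀ k : ℕ, ∃ C : ℝ, 0 < C ∧ ∃ ε₀ : ℝ, 0 < ε₀ ∧
        ∀ ε ∈ Set.Ioc (0:ℝ) 1, ε ≤ ε₀ → ∀ x ∈ K,
          |iteratedDeriv k (a ε) x| ≤ C * ε ^ (-p) ∧
          |iteratedDeriv k (b ε) x| ≤ C * ε ^ (-p))
    (v : ℝ → ℝ × ℝ → ℝ)
    (hvdef : ∀ ε ∈ Set.Ioc (0:ℝ) 1, ∀ x t : ℝ,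
      v ε (x, t) = (1/2) * (a ε (x - t) + a ε (x + t))
        + (1/2) * ∫ y in (x - t)..(x + t), b ε y) :
    GInfEstimateOn {p : ℝ × ℝ | |p.1| ≠ |p.2|} v := by
  intro K hKS hKc
  have hcm : Continuous fun q : ℝ × ℝ => q.1 - q.2 := by fun_prop
  have hcp : Continuous fun q : ℝ × ℝ => q.1 + q.2 := by fun_prop
  set K' : Set ℝ :=
    ((fun q : ℝ × ℝ => q.1 - q.2) '' K) ∪ ((fun q : ℝ × ℝ => q.1 + q.2) '' K) with hK'def
  have hK'c : IsCompact K' := (hKc.image hcm).union (hKc.image hcp)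
  have hK'0 : K' ⊆ {x : ℝ | x ≠ 0} := by
    rintro y (⟨q, hq, rfl⟩ | ⟨q, hq, rfl⟩) h0 <;> apply hKS hq
    · have h : q.1 = q.2 := by simpa [sub_eq_zero] using h0
      rw [h]
    · have h0' : q.1 + q.2 = 0 := h0
      have h : q.1 = -q.2 := by linarith
      rw [h, abs_neg]
  obtain ⟨pG, hpG, hGest⟩ := hGinf K' hK'0 hK'c
  obtain ⟨M0, hM0⟩ := hK'c.isBounded.subset_closedBall 0
  set M : ℝ := max M0 0 with hMdef
  have hMnn : 0 ≤ M := le_max_right _ _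
  have hM : ∀ y ∈ K', |y| ≤ M := by
    intro y hy
    have := hM0 hy
    rw [Metric.mem_closedBall, Real.dist_0_eq_abs] at this
    exact this.trans (le_max_left _ _)
  obtain ⟨p₀, hp₀, C₀, hC₀, e₀, he₀, hmod⟩ := hb.2 (Icc (-M) M) isCompact_Icc 0
  set p : ℝ := max pG p₀ with hpdef
  refine ⟨p, le_trans hpG (le_max_left _ _), fun k => ?_⟩
  obtain ⟨C1, hC1, e1, he1, hest1⟩ := hGest k
  obtain ⟨C2, hC2, e2, he2, hest2⟩ := hGest (k - 1)
  refine ⟨2 ^ k * (C1 + (C2 + M * C₀)), by positivity, min e1 (min e2 e₀),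
    lt_min he1 (lt_min he2 he₀), ?_⟩
  intro ε hε hεle q hq
  have hεle1 : ε ≤ e1 := hεle.trans (min_le_left _ _)
  have hεle2 : ε ≤ e2 := hεle.trans ((min_le_right _ _).trans (min_le_left _ _))
  have hεle0 : ε ≤ e₀ := hεle.trans ((min_le_right _ _).trans (min_le_right _ _))
  have hεpos : 0 < ε := hε.1
  have hrpow : ∀ p' : ℝ, p' ≤ p → ε ^ (-p') ≤ ε ^ (-p) :=
    fun p' hp' => Real.rpow_le_rpow_of_exponent_ge hεpos hε.2 (neg_le_neg hp')
  have hrpos : (0:ℝ) < ε ^ (-p) := Real.rpow_pos_of_pos hεpos _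
  set A : ℝ → ℝ := fun y => ∫ s in (0:ℝ)..y, b ε s with hAdef
  have hbC : ContDiff ℝ (⊤ : ℕ∞) (b ε) := hb.1 ε hε
  have haC : ContDiff ℝ (⊤ : ℕ∞) (a ε) := ha.1 ε hε
  have hAC : ContDiff ℝ (⊤ : ℕ∞) A := primitive_contDiff hbC
  set f : ℝ → ℝ := fun y => (1/2 : ℝ) • (a ε y + -A y) with hfdef
  set g : ℝ → ℝ := fun y => (1/2 : ℝ) • (a ε y + A y) with hgdef
  have hfC : ContDiff ℝ (⊤ : ℕ∞) f := ContDiff.const_smul _ (haC.add hAC.neg)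
  have hgC : ContDiff ℝ (⊤ : ℕ∞) g := ContDiff.const_smul _ (haC.add hAC)
  -- rewrite v ε
  have hveq : v ε = (f ∘ Lm) + (g ∘ Lp) := by
    funext w
    obtain ⟨x, t⟩ := w
    have hint : A (x + t) - A (x - t) = ∫ y in (x - t)..(x + t), b ε y :=
      intervalIntegral.integral_interval_sub_left
        (hbC.continuous.intervalIntegrable _ _) (hbC.continuous.intervalIntegrable _ _)
    simp only [Pi.add_apply, Function.comp_apply, Lm_apply, Lp_apply, hvdef ε hε x t,
      hfdef, hgdef, smul_eq_mul]
    rw [← hint]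
    ring
  -- bound on iterated derivatives of a ε on K'
  have habd : ∀ y ∈ K', ‖iteratedFDeriv ℝ k (a ε) y‖ ≤ C1 * ε ^ (-p) := by
    intro y hy
    rw [norm_iteratedFDeriv_eq_norm_iteratedDeriv, Real.norm_eq_abs]
    exact ((hest1 ε hε hεle1 y hy).1).trans
      (mul_le_mul_of_nonneg_left (hrpow pG (le_max_left _ _)) hC1.le)
  -- bound on iterated derivatives of A on K'
  have hAbd : ∀ y ∈ K', ‖iteratedFDeriv ℝ k A y‖ ≤ (C2 + M * C₀) * ε ^ (-p) := by
    intro y hy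
    match k with
    | 0 =>
      rw [norm_iteratedFDeriv_zero, hAdef, Real.norm_eq_abs]
      have hbdd : ∀ x ∈ Set.uIoc (0:ℝ) y, ‖b ε x‖ ≤ C₀ * ε ^ (-p₀) := by
        intro x hx
        have hxI : x ∈ Icc (-M) M := by
          have h1 := hx.1
          have h2 := hx.2
          have hyM := abs_le.mp (hM y hy)
          constructor
          · rcases le_total 0 y with h | h
            · have : min 0 y = 0 := min_eq_left h
              rw [this] at h1; linarith
            · have : min 0 y = y := min_eq_right h
              rw [this] at h1; linarith
          · rcases le_total 0 y with h | h
            · have : max 0 y = y := max_eq_right h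
              rw [this] at h2; linarith
            · have : max 0 y = 0 := max_eq_left h
              rw [this] at h2; linarith
        have := hmod ε hε hεle0 x hxI
        rwa [norm_iteratedFDeriv_zero] at this
      have := intervalIntegral.norm_integral_le_of_norm_le_const hbdd
      rw [Real.norm_eq_abs] at this
      calc |∫ s in (0:ℝ)..y, b ε s| ≤ C₀ * ε ^ (-p₀) * |y - 0| := this
        _ ≤ C₀ * ε ^ (-p₀) * M := by
            have : |y - 0| ≤ M := by rw [sub_zero]; exact hM y hy
            have h0 : 0 ≤ C₀ * ε ^ (-p₀) := by positivity
            exact mul_le_mul_of_nonneg_left this h0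
        _ ≤ C₀ * ε ^ (-p) * M := by
            have h1 : ε ^ (-p₀) ≤ ε ^ (-p) := hrpow p₀ (le_max_right _ _)
            have h2 : (0:ℝ) ≤ ε ^ (-p₀) := by positivity
            gcongr
        _ ≤ (C2 + M * C₀) * ε ^ (-p) := by nlinarith [mul_pos hC2 hrpos]
    | (j + 1) =>
      rw [norm_iteratedFDeriv_eq_norm_iteratedDeriv, hAdef,
        primitive_iteratedDeriv_succ hbC.continuous j, Real.norm_eq_abs]
      have hj : j + 1 - 1 = j := rfl
      have := (hest2 ε hε hεle2 y hy).2
      rw [hj] at this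
      calc |iteratedDeriv j (b ε) y| ≤ C2 * ε ^ (-pG) := this
        _ ≤ C2 * ε ^ (-p) := by
            have h1 : ε ^ (-pG) ≤ ε ^ (-p) := hrpow pG (le_max_left _ _)
            have h2 : (0:ℝ) ≤ ε ^ (-pG) := by positivity
            gcongr
        _ ≤ (C2 + M * C₀) * ε ^ (-p) := by
            nlinarith [mul_nonneg (mul_nonneg hMnn hC₀.le) hrpos.le]
  -- bounds for f and g
  have hnk : ContDiff ℝ (k : ℕ∞) (a ε) := haC.of_le (by exact_mod_cast le_top)
  have hnkA : ContDiff ℝ (k : ℕ∞) A := hAC.of_le (by exact_mod_cast le_top)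
  have hfbd : ∀ y ∈ K',
      ‖iteratedFDeriv ℝ k f y‖ ≤ (1/2) * ((C1 + (C2 + M * C₀)) * ε ^ (-p)) := by
    intro y hy
    have heq0 : iteratedFDeriv ℝ k f y
        = (1/2 : ℝ) • iteratedFDeriv ℝ k (fun z => a ε z + -A z) y := by
      rw [hfdef]; exact iteratedFDeriv_const_smul_apply' (a := (1/2:ℝ)) (hnk.add hnkA.neg).contDiffAt
    have heq1 : iteratedFDeriv ℝ k (fun z => a ε z + -A z) y
        = iteratedFDeriv ℝ k (a ε) y + iteratedFDeriv ℝ k (fun z => -A z) y :=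
      iteratedFDeriv_add_apply hnk.contDiffAt hnkA.neg.contDiffAt
    have heq : iteratedFDeriv ℝ k f y
        = (1/2 : ℝ) • (iteratedFDeriv ℝ k (a ε) y + iteratedFDeriv ℝ k (fun z => -A z) y) := by
      rw [heq0, heq1]
    rw [heq]
    refine (ContinuousMultilinearMap.opNorm_smul_le _ _).trans ?_
    rw [Real.norm_eq_abs, show |(1/2 : ℝ)| = 1/2 by norm_num]
    have h1 := habd y hy
    have h2 := hAbd y hy
    have h3 := norm_add_le (iteratedFDeriv ℝ k (a ε) y) (iteratedFDeriv ℝ k (fun z => -A z) y)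
    have h4 : ‖iteratedFDeriv ℝ k (fun z => -A z) y‖ = ‖iteratedFDeriv ℝ k A y‖ := by
      rw [show iteratedFDeriv ℝ k (fun z => -A z) y = -iteratedFDeriv ℝ k A y from
        iteratedFDeriv_neg_apply, norm_neg]
    rw [h4] at h3
    nlinarith [norm_nonneg (iteratedFDeriv ℝ k (a ε) y + iteratedFDeriv ℝ k (fun z => -A z) y)]
  have hgbd : ∀ y ∈ K',
      ‖iteratedFDeriv ℝ k g y‖ ≤ (1/2) * ((C1 + (C2 + M * C₀)) * ε ^ (-p)) := by
    intro y hy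
    have heq0 : iteratedFDeriv ℝ k g y
        = (1/2 : ℝ) • iteratedFDeriv ℝ k (fun z => a ε z + A z) y := by
      rw [hgdef]; exact iteratedFDeriv_const_smul_apply' (a := (1/2:ℝ)) (hnk.add hnkA).contDiffAt
    have heq1 : iteratedFDeriv ℝ k (fun z => a ε z + A z) y
        = iteratedFDeriv ℝ k (a ε) y + iteratedFDeriv ℝ k A y :=
      iteratedFDeriv_add_apply hnk.contDiffAt hnkA.contDiffAt
    have heq : iteratedFDeriv ℝ k g y
        = (1/2 : ℝ) • (iteratedFDeriv ℝ k (a ε) y + iteratedFDeriv ℝ k A y) := by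
      rw [heq0, heq1]
    rw [heq]
    refine (ContinuousMultilinearMap.opNorm_smul_le _ _).trans ?_
    rw [Real.norm_eq_abs, show |(1/2 : ℝ)| = 1/2 by norm_num]
    have h1 := habd y hy
    have h2 := hAbd y hy
    have h3 := norm_add_le (iteratedFDeriv ℝ k (a ε) y) (iteratedFDeriv ℝ k A y)
    linarith
  -- put everything together
  have hmemm : Lm q ∈ K' := Or.inl ⟨q, hq, rfl⟩
  have hmemp : Lp q ∈ K' := Or.inr ⟨q, hq, rfl⟩
  have hfLC : ContDiff ℝ (k : ℕ∞) (f ∘ Lm) :=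
    (hfC.of_le (by exact_mod_cast le_top)).comp Lm.contDiff
  have hgLC : ContDiff ℝ (k : ℕ∞) (g ∘ Lp) :=
    (hgC.of_le (by exact_mod_cast le_top)).comp Lp.contDiff
  rw [hveq]
  calc ‖iteratedFDeriv ℝ k (f ∘ Lm + g ∘ Lp) q‖
      = ‖iteratedFDeriv ℝ k (f ∘ Lm) q + iteratedFDeriv ℝ k (g ∘ Lp) q‖ := by
        rw [iteratedFDeriv_add_apply hfLC.contDiffAt hgLC.contDiffAt]
    _ ≤ ‖iteratedFDeriv ℝ k (f ∘ Lm) q‖ + ‖iteratedFDeriv ℝ k (g ∘ Lp) q‖ := norm_add_le _ _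
    _ ≤ 2 ^ k * ‖iteratedFDeriv ℝ k f (Lm q)‖ + 2 ^ k * ‖iteratedFDeriv ℝ k g (Lp q)‖ :=
        add_le_add (comp_clm_bound hfC Lm norm_Lm_le k q) (comp_clm_bound hgC Lp norm_Lp_le k q)
    _ ≤ 2 ^ k * ((1/2) * ((C1 + (C2 + M * C₀)) * ε ^ (-p)))
        + 2 ^ k * ((1/2) * ((C1 + (C2 + M * C₀)) * ε ^ (-p))) := by
        have hp2 : (0:ℝ) ≤ 2 ^ k := by positivity
        exact add_le_add (mul_le_mul_of_nonneg_left (hfbd _ hmemm) hp2)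
          (mul_le_mul_of_nonneg_left (hgbd _ hmemp) hp2)
    _ = 2 ^ k * (C1 + (C2 + M * C₀)) * ε ^ (-p) := by ring
end
end

section
/- Let φ ∈ S(ℝ) and set φ_ε(x) = ε^{−1}φ(x/ε). For ε ∈ (0,1] define u_ε(x,t) = ½∫_{x−t}^{x+t} φ_ε(y)² dy (the d'Alembert solution of the linear wave equation with data u(·,0) = 0, ∂_t u(·,0) = φ_ε²). Then for every (x,t) ∈ ℝ² with |x| < t, lim_{ε→0} ε·u_ε(x,t) = ½∫_ℝ φ(y)² dy. In particular, if φ is not identically zero, then for each such (x,t) the net ε ↦ u_ε(x,t) tends to +∞ as ε → 0. -/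
open Real Set Filter MeasureTheory Topology

noncomputable section

/-- The d'Alembert solution with initial data `u(·,0) = 0`,
`∂_t u(·,0) = φ_ε²` (the square of the mollified Dirac measure), evaluated
inside the forward light-cone, blows up like `ε⁻¹ · ½∫φ²`. -/
theorem delta_squared_wave (φ : SchwartzMap ℝ ℝ)
    (u : ℝ → ℝ → ℝ → ℝ)
    (hu : ∀ ε : ℝ, ∀ x t : ℝ,
      u ε x t = (1/2) * ∫ y in (x - t)..(x + t), (ε⁻¹ * φ (y / ε)) ^ 2) :
    (∀ x t : ℝ, |x| < t →
      Tendsto (fun ε => ε * u ε x t) (𝓝[>] (0:ℝ))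
        (𝓝 ((1/2) * ∫ y : ℝ, (φ y) ^ 2))) ∧
    (φ ≠ 0 → ∀ x t : ℝ, |x| < t →
      Tendsto (fun ε => u ε x t) (𝓝[>] (0:ℝ)) atTop) := by
  -- integrability of φ²
  have hint : Integrable (fun y : ℝ => φ y ^ 2) := by
    obtain ⟨C, hC⟩ := φ.decay 0 0
    simp only [pow_zero, one_mul, norm_iteratedFDeriv_zero] at hC
    have h := (φ.integrable (μ := volume)).bdd_mul φ.continuous.aestronglyMeasurable (ae_of_all _ hC.2)
    simpa [sq] using h
  have key : ∀ x t : ℝ, |x| < t →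
      Tendsto (fun ε => ε * u ε x t) (𝓝[>] (0:ℝ))
        (𝓝 ((1/2) * ∫ y : ℝ, φ y ^ 2)) := by
    intro x t hxt
    have h1 : x - t < 0 := by
      have := le_abs_self x; linarith
    have h2 : 0 < x + t := by
      have := neg_abs_le x; linarith
    have heq : ∀ᶠ ε in 𝓝[>] (0:ℝ), ε * u ε x t
        = (1/2) * ∫ z in ((x - t)/ε)..((x + t)/ε), φ z ^ 2 := by
      filter_upwards [self_mem_nhdsWithin] with ε (hε : 0 < ε)
      have hε0 : ε ≠ 0 := ne_of_gt hε
      rw [hu]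
      have hfun : (fun y => (ε⁻¹ * φ (y / ε)) ^ 2)
          = fun y => ε⁻¹ ^ 2 * (fun z => φ z ^ 2) (y / ε) := by
        funext y; ring
      rw [hfun, intervalIntegral.integral_const_mul,
        intervalIntegral.integral_comp_div (fun z => φ z ^ 2) hε0, smul_eq_mul]
      field_simp
    have hbot : Tendsto (fun ε : ℝ => (x - t)/ε) (𝓝[>] (0:ℝ)) atBot := by
      simp only [div_eq_mul_inv]
      exact (tendsto_const_mul_atBot_of_neg h1).mpr tendsto_inv_nhdsGT_zero
    have htop : Tendsto (fun ε : ℝ => (x + t)/ε) (𝓝[>] (0:ℝ)) atTop := by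
      simp only [div_eq_mul_inv]
      exact Tendsto.const_mul_atTop h2 tendsto_inv_nhdsGT_zero
    have hmain := (intervalIntegral_tendsto_integral hint hbot htop).const_mul (1/2 : ℝ)
    exact Tendsto.congr' (heq.mono fun ε h => h.symm) hmain
  refine ⟨key, fun hφ x t hxt => ?_⟩
  have hpos : 0 < ∫ y : ℝ, φ y ^ 2 := by
    rw [integral_pos_iff_support_of_nonneg (fun y => sq_nonneg (φ y)) hint]
    have hne : ∃ y, φ y ≠ 0 := by
      by_contra h
      push_neg at h
      exact hφ (SchwartzMap.ext h)
    obtain ⟨y, hy⟩ := hne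
    have hopen : IsOpen {y : ℝ | φ y ≠ 0} := isOpen_compl_singleton.preimage φ.continuous
    have hsupp : (Function.support fun y : ℝ => φ y ^ 2) = {y | φ y ≠ 0} := by
      ext z; simp [Function.support, pow_eq_zero_iff]
    rw [hsupp]
    exact hopen.measure_pos volume ⟨y, hy⟩
  have hlim := key x t hxt
  have h1 : Tendsto (fun ε : ℝ => ε⁻¹ * (ε * u ε x t)) (𝓝[>] (0:ℝ)) atTop :=
    tendsto_inv_nhdsGT_zero.atTop_mul_pos (by positivity) hlim
  refine h1.congr' ?_
  filter_upwards [self_mem_nhdsWithin] with ε (hε : 0 < ε)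
  field_simp
end
end

section
/- Let f : ℝ → ℝ be admissible. Let a, b ∈ C(ℝ) and h ∈ C(ℝ×[0,∞)), and let w ∈ C(ℝ×[0,∞)) satisfy the integral equation w(x,t) = ½(a(x−t) + a(x+t)) + ½∫_{x−t}^{x+t} b(y)dy + ½∫_0^t∫_{x−t+s}^{x+t−s} (f(w(y,s)) + h(y,s)) dy ds for all x ∈ ℝ, t ≥ 0. Let (a_ε), (b_ε) be smooth functions on ℝ converging to a, b locally uniformly on ℝ, and (h_ε) smooth functions on ℝ² converging to h locally uniformly on ℝ×[0,∞), and for each ε let u_ε ∈ C^∞(ℝ²) solve ∂_t²u_ε − ∂_x²u_ε = f(u_ε) + h_ε with u_ε(·,0) = a_ε, ∂_t u_ε(·,0) = b_ε. Then u_ε → w uniformly on every trapezoid K_T (κ > 0, 0 ≤ T ≤ κ) as ε → 0. -/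
open Real Set Filter MeasureTheory Topology

set_option maxHeartbeats 1600000

noncomputable section

/-- An admissible nonlinearity: smooth, vanishing at 0, globally Lipschitz
(bounded first derivative), and all derivatives of at most polynomial growth. -/
def Admissible (f : ℝ → ℝ) : Prop :=
  ContDiff ℝ (⊤ : ℕ∞) f ∧ f 0 = 0 ∧ (∃ L : ℝ, ∀ y : ℝ, |deriv f y| ≤ L) ∧
  ∀ k : ℕ, ∃ C : ℝ, 0 < C ∧ ∃ N : ℕ, ∀ y : ℝ, |iteratedDeriv k f y| ≤ C * (1 + |y|) ^ N

/-- The wave operator `∂_t² - ∂_x²` on functions of `(x,t) ∈ ℝ²`. -/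
def waveOp (w : ℝ × ℝ → ℝ) (p : ℝ × ℝ) : ℝ :=
  iteratedDeriv 2 (fun s => w (p.1, s)) p.2 - iteratedDeriv 2 (fun y => w (y, p.2)) p.1

/-- The trapezoidal domain of dependence `K_T` over the base `[-κ,κ]`. -/
def KT (κ T : ℝ) : Set (ℝ × ℝ) :=
  {p : ℝ × ℝ | 0 ≤ p.2 ∧ p.2 ≤ T ∧ |p.1| ≤ κ - p.2}

/-- first partial (space) -/
def pdx (U : ℝ × ℝ → ℝ) (p : ℝ × ℝ) : ℝ := fderiv ℝ U p (1, 0)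
/-- second partial (time) -/
def pdt (U : ℝ × ℝ → ℝ) (p : ℝ × ℝ) : ℝ := fderiv ℝ U p (0, 1)

lemma pdx_contDiff {U : ℝ × ℝ → ℝ} (hU : ContDiff ℝ (⊤ : ℕ∞) U) :
    ContDiff ℝ (⊤ : ℕ∞) (pdx U) :=
  (hU.fderiv_right (le_refl _)).clm_apply contDiff_const

lemma pdt_contDiff {U : ℝ × ℝ → ℝ} (hU : ContDiff ℝ (⊤ : ℕ∞) U) :
    ContDiff ℝ (⊤ : ℕ∞) (pdt U) :=
  (hU.fderiv_right (le_refl _)).clm_apply contDiff_const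

lemma hasDerivAt_comp_curve {U : ℝ × ℝ → ℝ} (hU : ContDiff ℝ (⊤ : ℕ∞) U)
    {γ : ℝ → ℝ × ℝ} {v : ℝ × ℝ} {s : ℝ} (hγ : HasDerivAt γ v s) :
    HasDerivAt (fun s' => U (γ s')) (v.1 * pdx U (γ s) + v.2 * pdt U (γ s)) s := by
  have hfd : HasFDerivAt U (fderiv ℝ U (γ s)) (γ s) :=
    (hU.differentiable (by simp) (γ s)).hasFDerivAt
  have h2 := hfd.comp_hasDerivAt s hγ
  have hv : (fderiv ℝ U (γ s)) v = v.1 * pdx U (γ s) + v.2 * pdt U (γ s) := by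
    have hvv : v = v.1 • ((1:ℝ), (0:ℝ)) + v.2 • ((0:ℝ), (1:ℝ)) := by
      simp [Prod.ext_iff]
    nth_rewrite 1 [hvv]
    rw [map_add, (fderiv ℝ U (γ s)).map_smul, (fderiv ℝ U (γ s)).map_smul]
    simp [pdx, pdt]
  rw [← hv]
  exact h2

lemma hasDerivAt_slicex {U : ℝ × ℝ → ℝ} (hU : ContDiff ℝ (⊤ : ℕ∞) U) (y t : ℝ) :
    HasDerivAt (fun y' => U (y', t)) (pdx U (y, t)) y := by
  have h : HasDerivAt (fun y' : ℝ => ((y' : ℝ), t)) ((1:ℝ), (0:ℝ)) y :=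
    (hasDerivAt_id y).prodMk (hasDerivAt_const y t)
  simpa using hasDerivAt_comp_curve hU h

lemma hasDerivAt_slicet {U : ℝ × ℝ → ℝ} (hU : ContDiff ℝ (⊤ : ℕ∞) U) (y t : ℝ) :
    HasDerivAt (fun t' => U (y, t')) (pdt U (y, t)) t := by
  have h : HasDerivAt (fun t' : ℝ => ((y : ℝ), t')) ((0:ℝ), (1:ℝ)) t :=
    (hasDerivAt_const t y).prodMk (hasDerivAt_id t)
  simpa using hasDerivAt_comp_curve hU h

lemma waveOp_eq {U : ℝ × ℝ → ℝ} (hU : ContDiff ℝ (⊤ : ℕ∞) U) (p : ℝ × ℝ) :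
    waveOp U p = pdt (pdt U) p - pdx (pdx U) p := by
  obtain ⟨x, t⟩ := p
  have h2t : iteratedDeriv 2 (fun s => U (x, s)) t = pdt (pdt U) (x, t) := by
    rw [show (2:ℕ) = 1 + 1 from rfl, iteratedDeriv_succ, iteratedDeriv_one]
    have : deriv (fun s => U (x, s)) = fun s => pdt U (x, s) := by
      funext s; exact (hasDerivAt_slicet hU x s).deriv
    rw [this]
    exact (hasDerivAt_slicet (pdt_contDiff hU) x t).deriv
  have h2x : iteratedDeriv 2 (fun y => U (y, t)) x = pdx (pdx U) (x, t) := by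
    rw [show (2:ℕ) = 1 + 1 from rfl, iteratedDeriv_succ, iteratedDeriv_one]
    have : deriv (fun y => U (y, t)) = fun y => pdx U (y, t) := by
      funext y; exact (hasDerivAt_slicex hU y t).deriv
    rw [this]
    exact (hasDerivAt_slicex (pdx_contDiff hU) x t).deriv
  simp [waveOp, h2t, h2x]

/-- the triangle region, as subset of (s,y)-space -/
def triReg (x₀ t₀ : ℝ) : Set (ℝ × ℝ) :=
  {q : ℝ × ℝ | q.1 ∈ Set.Ioc 0 t₀ ∧ q.2 ∈ Set.Ioc (x₀ - t₀ + q.1) (x₀ + t₀ - q.1)}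

lemma triReg_measurable (x₀ t₀ : ℝ) : MeasurableSet (triReg x₀ t₀) := by
  have h1 : MeasurableSet {q : ℝ × ℝ | 0 < q.1} := measurableSet_lt measurable_const measurable_fst
  have h2 : MeasurableSet {q : ℝ × ℝ | q.1 ≤ t₀} := measurableSet_le measurable_fst measurable_const
  have h3 : MeasurableSet {q : ℝ × ℝ | x₀ - t₀ + q.1 < q.2} :=
    measurableSet_lt (measurable_const.add measurable_fst) measurable_snd
  have h4 : MeasurableSet {q : ℝ × ℝ | q.2 ≤ x₀ + t₀ - q.1} :=
    measurableSet_le measurable_snd (measurable_const.sub measurable_fst)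
  have : triReg x₀ t₀ = ({q : ℝ × ℝ | 0 < q.1} ∩ {q | q.1 ≤ t₀}) ∩
      ({q | x₀ - t₀ + q.1 < q.2} ∩ {q | q.2 ≤ x₀ + t₀ - q.1}) := by
    ext q
    simp only [triReg, Set.mem_setOf_eq, Set.mem_Ioc, Set.mem_inter_iff]
  rw [this]
  exact (h1.inter h2).inter (h3.inter h4)

/-- indicator integrand -/
def triF (g : ℝ × ℝ → ℝ) (x₀ t₀ : ℝ) : ℝ × ℝ → ℝ :=
  (triReg x₀ t₀).indicator (fun q => g (q.2, q.1))

lemma triF_integrable (g : ℝ × ℝ → ℝ) (hg : Continuous g) (x₀ t₀ : ℝ) :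
    Integrable (triF g x₀ t₀) := by
  rw [triF, integrable_indicator_iff (triReg_measurable x₀ t₀)]
  have hsub : triReg x₀ t₀ ⊆ Set.Icc 0 t₀ ×ˢ Set.Icc (x₀ - t₀) (x₀ + t₀) := by
    rintro ⟨s, y⟩ ⟨hs, hy⟩
    simp only [Set.mem_Ioc] at hs hy
    refine ⟨⟨le_of_lt hs.1, hs.2⟩, ?_, ?_⟩ <;> simp only [] <;> [linarith [hy.1, hs.1]; linarith [hy.2, hs.1]]
  have : IntegrableOn (fun q : ℝ × ℝ => g (q.2, q.1))
      (Set.Icc 0 t₀ ×ˢ Set.Icc (x₀ - t₀) (x₀ + t₀)) :=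
    (hg.comp continuous_swap).continuousOn.integrableOn_compact
      (isCompact_Icc.prod isCompact_Icc)
  exact this.mono_set hsub

lemma triF_slice (g : ℝ × ℝ → ℝ) (x₀ t₀ s : ℝ) (hs : s ∈ Set.Ioc 0 t₀) :
    (fun y : ℝ => triF g x₀ t₀ (s, y)) =
      (Set.Ioc (x₀ - t₀ + s) (x₀ + t₀ - s)).indicator (fun y => g (y, s)) := by
  funext y
  by_cases hy : y ∈ Set.Ioc (x₀ - t₀ + s) (x₀ + t₀ - s)
  · have : (s, y) ∈ triReg x₀ t₀ := ⟨hs, hy⟩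
    simp [triF, Set.indicator_of_mem hy, Set.indicator_of_mem this]
  · have : (s, y) ∉ triReg x₀ t₀ := fun hc => hy hc.2
    simp [triF, Set.indicator_of_notMem hy, Set.indicator_of_notMem this]

lemma fub (g : ℝ × ℝ → ℝ) (hg : Continuous g) (x₀ t₀ : ℝ) (ht : 0 ≤ t₀) :
    (∫ s in (0:ℝ)..t₀, ∫ y in (x₀ - t₀ + s)..(x₀ + t₀ - s), g (y, s)) =
    ∫ y in (x₀ - t₀)..(x₀ + t₀),
      ∫ s in (0:ℝ)..(min (y - (x₀ - t₀)) ((x₀ + t₀) - y)), g (y, s) := by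
  have hηξ : x₀ - t₀ ≤ x₀ + t₀ := by linarith
  have hL : (∫ s in (0:ℝ)..t₀, ∫ y in (x₀ - t₀ + s)..(x₀ + t₀ - s), g (y, s))
      = ∫ s : ℝ, ∫ y : ℝ, triF g x₀ t₀ (s, y) := by
    rw [intervalIntegral.integral_of_le ht]
    rw [← setIntegral_eq_integral_of_forall_compl_eq_zero
      (s := Set.Ioc (0:ℝ) t₀) (f := fun s : ℝ => ∫ y : ℝ, triF g x₀ t₀ (s, y))]
    · apply setIntegral_congr_fun measurableSet_Ioc
      intro s hs
      dsimp only
      have hle : x₀ - t₀ + s ≤ x₀ + t₀ - s := by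
        simp only [Set.mem_Ioc] at hs; linarith [hs.2]
      rw [intervalIntegral.integral_of_le hle, triF_slice g x₀ t₀ s hs,
        integral_indicator measurableSet_Ioc]
    · intro s hs
      have : (fun y : ℝ => triF g x₀ t₀ (s, y)) = fun _ => 0 := by
        funext y
        have : (s, y) ∉ triReg x₀ t₀ := fun hc => hs hc.1
        simp [triF, Set.indicator_of_notMem this]
      rw [this]; simp
  have hR : (∫ y in (x₀ - t₀)..(x₀ + t₀),
        ∫ s in (0:ℝ)..(min (y - (x₀ - t₀)) ((x₀ + t₀) - y)), g (y, s))
      = ∫ y : ℝ, ∫ s : ℝ, triF g x₀ t₀ (s, y) := by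
    rw [intervalIntegral.integral_of_le hηξ]
    rw [← setIntegral_eq_integral_of_forall_compl_eq_zero
      (s := Set.Ioc (x₀ - t₀) (x₀ + t₀)) (f := fun y : ℝ => ∫ s : ℝ, triF g x₀ t₀ (s, y))]
    · apply setIntegral_congr_fun measurableSet_Ioc
      intro y hy
      dsimp only
      simp only [Set.mem_Ioc] at hy
      have hσ0 : 0 ≤ min (y - (x₀ - t₀)) ((x₀ + t₀) - y) :=
        le_min (by linarith [hy.1]) (by linarith [hy.2])
      rw [intervalIntegral.integral_of_le hσ0]
      set S : Set ℝ := {s : ℝ | s ∈ Set.Ioc 0 t₀ ∧ x₀ - t₀ + s < y ∧ y ≤ x₀ + t₀ - s} with hS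
      have hind : (fun s : ℝ => triF g x₀ t₀ (s, y)) = S.indicator (fun s => g (y, s)) := by
        funext s
        by_cases hsy : (s, y) ∈ triReg x₀ t₀
        · have hs' : s ∈ S := ⟨hsy.1, hsy.2.1, hsy.2.2⟩
          simp [triF, Set.indicator_of_mem hs', Set.indicator_of_mem hsy]
        · have hs' : s ∉ S := fun hc => hsy ⟨hc.1, hc.2.1, hc.2.2⟩
          simp [triF, Set.indicator_of_notMem hs', Set.indicator_of_notMem hsy]
      have hSmeas : MeasurableSet S := by
        have : S = Set.Ioc 0 t₀ ∩ ({s : ℝ | x₀ - t₀ + s < y} ∩ {s : ℝ | y ≤ x₀ + t₀ - s}) := by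
          ext s
          simp only [hS, Set.mem_setOf_eq, Set.mem_inter_iff, Set.mem_Ioc]
        rw [this]
        exact measurableSet_Ioc.inter
          ((measurableSet_lt (measurable_const.add measurable_id) measurable_const).inter
            (measurableSet_le measurable_const (measurable_const.sub measurable_id)))
      rw [hind, integral_indicator hSmeas]
      symm
      apply setIntegral_congr_set
      rw [MeasureTheory.ae_eq_set]
      constructor
      · refine measure_mono_null (fun s hs => ?_) (measure_empty (μ := (volume : Measure ℝ)))
        simp only [Set.mem_diff, hS, Set.mem_setOf_eq, Set.mem_Ioc] at hs
        obtain ⟨⟨⟨hs1, hs2⟩, hs3, hs4⟩, hs5⟩ := hs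
        exact absurd ⟨hs1, le_min (by linarith) (by linarith)⟩ hs5
      · refine measure_mono_null (fun s hs => ?_) (measure_singleton (y - (x₀ - t₀)))
        simp only [Set.mem_diff, hS, Set.mem_setOf_eq, Set.mem_Ioc, Set.mem_singleton_iff] at hs ⊢
        obtain ⟨⟨hs1, hs2⟩, hs5⟩ := hs
        have ha : s ≤ y - (x₀ - t₀) := le_trans hs2 (min_le_left _ _)
        have hbb : s ≤ (x₀ + t₀) - y := le_trans hs2 (min_le_right _ _)
        have hst : s ≤ t₀ := by linarith
        by_contra hne
        apply hs5
        refine ⟨⟨hs1, hst⟩, ?_, by linarith⟩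
        rcases lt_or_eq_of_le ha with hl | he
        · linarith
        · exact absurd he hne
    · intro y hy
      have : (fun s : ℝ => triF g x₀ t₀ (s, y)) = fun _ => 0 := by
        funext s
        have : (s, y) ∉ triReg x₀ t₀ := by
          rintro ⟨hs, hy2⟩
          simp only [Set.mem_Ioc] at hs hy2
          exact hy ⟨by linarith [hy2.1, hs.1], by linarith [hy2.2, hs.1]⟩
        simp [triF, Set.indicator_of_notMem this]
      rw [this]; simp
  rw [hL, hR]
  have huncurry : Function.uncurry (fun s y => triF g x₀ t₀ (s, y)) = triF g x₀ t₀ := rfl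
  exact MeasureTheory.integral_integral_swap
    (f := fun s y => triF g x₀ t₀ (s, y))
    (by rw [huncurry, ← MeasureTheory.Measure.volume_eq_prod]; exact triF_integrable g hg x₀ t₀)

lemma paramIntegrable (g : ℝ × ℝ → ℝ) (hg : Continuous g) (x t : ℝ) (ht : 0 ≤ t) :
    IntervalIntegrable (fun s => ∫ y in (x - t + s)..(x + t - s), g (y, s)) volume 0 t := by
  rw [intervalIntegrable_iff, Set.uIoc_of_le ht]
  obtain ⟨C, hC⟩ := (IsCompact.prod (isCompact_Icc (a := x - t) (b := x + t))
      (isCompact_Icc (a := (0:ℝ)) (b := t))).exists_bound_of_continuousOn hg.continuousOn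
  have hC0 : 0 ≤ C := le_trans (norm_nonneg (g (x - t, 0)))
    (hC (x - t, 0) (by
      simp only [Set.mem_prod, Set.mem_Icc]
      exact ⟨⟨le_refl _, by linarith⟩, le_refl _, ht⟩))
  have hmeas : StronglyMeasurable (fun s : ℝ => ∫ y : ℝ, triF g x t (s, y)) := by
    apply MeasureTheory.StronglyMeasurable.integral_prod_right'
      (f := triF g x t)
    exact (((hg.comp continuous_swap).measurable).indicator (triReg_measurable x t)).stronglyMeasurable
  have heq : ∀ s ∈ Set.Ioc (0:ℝ) t,
      (fun s : ℝ => ∫ y : ℝ, triF g x t (s, y)) s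
        = ∫ y in (x - t + s)..(x + t - s), g (y, s) := by
    intro s hs
    dsimp only
    have hle : x - t + s ≤ x + t - s := by
      simp only [Set.mem_Ioc] at hs; linarith [hs.2]
    rw [intervalIntegral.integral_of_le hle, triF_slice g x t s hs,
      integral_indicator measurableSet_Ioc]
  apply Integrable.mono' (g := fun _ : ℝ => C * (2 * t))
    (integrableOn_const measure_Ioc_lt_top.ne)
  · exact hmeas.aestronglyMeasurable.restrict.congr
      ((ae_restrict_iff' measurableSet_Ioc).2 (ae_of_all _ heq))
  · refine (ae_restrict_iff' measurableSet_Ioc).2 (ae_of_all _ fun s hs => ?_)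
    simp only [Set.mem_Ioc] at hs
    have h1 : ‖∫ y in (x - t + s)..(x + t - s), g (y, s)‖ ≤ C * |(x + t - s) - (x - t + s)| := by
      apply intervalIntegral.norm_integral_le_of_norm_le_const
      intro y hy
      rw [Set.uIoc_of_le (by linarith [hs.2])] at hy
      exact hC (y, s) ⟨⟨by linarith [hy.1, hs.1], by linarith [hy.2, hs.1]⟩, le_of_lt hs.1, hs.2⟩
    calc ‖∫ y in (x - t + s)..(x + t - s), g (y, s)‖
        ≤ C * |(x + t - s) - (x - t + s)| := h1
      _ ≤ C * (2 * t) := by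
          apply mul_le_mul_of_nonneg_left _ hC0
          rw [abs_of_nonneg (by linarith [hs.2])]
          linarith [hs.1]

lemma duhamel (U : ℝ × ℝ → ℝ) (hU : ContDiff ℝ (⊤ : ℕ∞) U)
    (G : ℝ × ℝ → ℝ) (hG : Continuous G) (hpde : ∀ p, waveOp U p = G p)
    (x₀ t₀ : ℝ) (ht : 0 ≤ t₀) :
    U (x₀, t₀) = (1/2) * (U (x₀ - t₀, 0) + U (x₀ + t₀, 0))
      + (1/2) * (∫ y in (x₀ - t₀)..(x₀ + t₀), pdt U (y, 0))
      + (1/2) * ∫ s in (0:ℝ)..t₀, ∫ y in (x₀ - t₀ + s)..(x₀ + t₀ - s), G (y, s) := by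
  have hUc : Continuous U := hU.continuous
  have hUx := pdx_contDiff hU
  have hUt := pdt_contDiff hU
  have hUxx := pdx_contDiff hUx
  have hUtt := pdt_contDiff hUt
  have hGeq : ∀ p : ℝ × ℝ, G p = pdt (pdt U) p - pdx (pdx U) p := by
    intro p; rw [← hpde p, waveOp_eq hU]
  have cUtt2 : ∀ s : ℝ, Continuous fun y : ℝ => pdt (pdt U) (y, s) := fun s => by
    exact hUtt.continuous.comp (continuous_id.prodMk continuous_const)
  have cUxx2 : ∀ s : ℝ, Continuous fun y : ℝ => pdx (pdx U) (y, s) := fun s => by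
    exact hUxx.continuous.comp (continuous_id.prodMk continuous_const)
  have cUttv : ∀ y : ℝ, Continuous fun s : ℝ => pdt (pdt U) (y, s) := fun y => by
    exact hUtt.continuous.comp (continuous_const.prodMk continuous_id)
  have cmin : Continuous fun y : ℝ => pdt U (y, min (y - (x₀ - t₀)) ((x₀ + t₀) - y)) := by
    exact hUt.continuous.comp (continuous_id.prodMk (by fun_prop))
  have czero : Continuous fun y : ℝ => pdt U (y, (0:ℝ)) := by
    exact hUt.continuous.comp (continuous_id.prodMk continuous_const)
  have c1 : Continuous fun s : ℝ => pdx U (x₀ - t₀ + s, s) := by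
    exact hUx.continuous.comp ((continuous_const.add continuous_id).prodMk continuous_id)
  have c2 : Continuous fun s : ℝ => pdt U (x₀ - t₀ + s, s) := by
    exact hUt.continuous.comp ((continuous_const.add continuous_id).prodMk continuous_id)
  have c3 : Continuous fun s : ℝ => pdx U (x₀ + t₀ - s, s) := by
    exact hUx.continuous.comp ((continuous_const.sub continuous_id).prodMk continuous_id)
  have c4 : Continuous fun s : ℝ => pdt U (x₀ + t₀ - s, s) := by
    exact hUt.continuous.comp ((continuous_const.sub continuous_id).prodMk continuous_id)
  -- step 1
  have step1 : ∀ s : ℝ, (∫ y in (x₀ - t₀ + s)..(x₀ + t₀ - s), G (y, s)) =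
      (∫ y in (x₀ - t₀ + s)..(x₀ + t₀ - s), pdt (pdt U) (y, s))
        - (pdx U (x₀ + t₀ - s, s) - pdx U (x₀ - t₀ + s, s)) := by
    intro s
    have hsub : (∫ y in (x₀ - t₀ + s)..(x₀ + t₀ - s), G (y, s)) =
        (∫ y in (x₀ - t₀ + s)..(x₀ + t₀ - s), pdt (pdt U) (y, s))
          - ∫ y in (x₀ - t₀ + s)..(x₀ + t₀ - s), pdx (pdx U) (y, s) := by
      rw [← intervalIntegral.integral_sub
        (((cUtt2 s)).intervalIntegrable _ _)
        (((cUxx2 s)).intervalIntegrable _ _)]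
      apply intervalIntegral.integral_congr
      intro y _
      exact hGeq (y, s)
    rw [hsub]
    congr 1
    exact intervalIntegral.integral_eq_sub_of_hasDerivAt
      (fun y _ => hasDerivAt_slicex hUx y s)
      ((cUxx2 s).intervalIntegrable _ _)
  -- step 2 : split the double integral
  have step2 : (∫ s in (0:ℝ)..t₀, ∫ y in (x₀ - t₀ + s)..(x₀ + t₀ - s), G (y, s))
      = (∫ s in (0:ℝ)..t₀, ∫ y in (x₀ - t₀ + s)..(x₀ + t₀ - s), pdt (pdt U) (y, s))
        - ∫ s in (0:ℝ)..t₀, (pdx U (x₀ + t₀ - s, s) - pdx U (x₀ - t₀ + s, s)) := by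
    rw [← intervalIntegral.integral_sub
      (paramIntegrable (pdt (pdt U)) hUtt.continuous x₀ t₀ ht)
      (show IntervalIntegrable (fun s => pdx U (x₀ + t₀ - s, s) - pdx U (x₀ - t₀ + s, s)) volume 0 t₀
        from (c3.sub c1).intervalIntegrable _ _)]
    apply intervalIntegral.integral_congr
    intro s _
    exact step1 s
  -- step 3 : Fubini + FTC in time on the Utt term
  have step3 : (∫ s in (0:ℝ)..t₀, ∫ y in (x₀ - t₀ + s)..(x₀ + t₀ - s), pdt (pdt U) (y, s))
      = (∫ y in (x₀ - t₀)..(x₀ + t₀), pdt U (y, min (y - (x₀ - t₀)) ((x₀ + t₀) - y)))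
        - ∫ y in (x₀ - t₀)..(x₀ + t₀), pdt U (y, 0) := by
    rw [fub (pdt (pdt U)) hUtt.continuous x₀ t₀ ht]
    rw [← intervalIntegral.integral_sub
      (cmin.intervalIntegrable _ _) (czero.intervalIntegrable _ _)]
    apply intervalIntegral.integral_congr
    intro y _
    exact intervalIntegral.integral_eq_sub_of_hasDerivAt
      (fun s _ => hasDerivAt_slicet hUt y s)
      ((cUttv y).intervalIntegrable _ _)
  -- step 4 : split at x₀ and substitute
  have step4 : (∫ y in (x₀ - t₀)..(x₀ + t₀), pdt U (y, min (y - (x₀ - t₀)) ((x₀ + t₀) - y)))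
      = (∫ s in (0:ℝ)..t₀, pdt U (x₀ - t₀ + s, s))
        + ∫ s in (0:ℝ)..t₀, pdt U (x₀ + t₀ - s, s) := by
    have hcont := cmin
    rw [← intervalIntegral.integral_add_adjacent_intervals
      (a := x₀ - t₀) (b := x₀) (c := x₀ + t₀)
      (hcont.intervalIntegrable _ _) (hcont.intervalIntegrable _ _)]
    congr 1
    · -- left piece
      have hcongr : (∫ y in (x₀ - t₀)..x₀, pdt U (y, min (y - (x₀ - t₀)) ((x₀ + t₀) - y)))
          = ∫ y in (x₀ - t₀)..x₀, pdt U (y, y - (x₀ - t₀)) := by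
        apply intervalIntegral.integral_congr
        intro y hy
        rw [Set.uIcc_of_le (by linarith)] at hy
        dsimp only
        congr 1
        rw [min_eq_left (by simp only [Set.mem_Icc] at hy; linarith [hy.2])]
      rw [hcongr]
      have := intervalIntegral.integral_comp_add_right
        (a := (0:ℝ)) (b := t₀) (fun y => pdt U (y, y - (x₀ - t₀))) (x₀ - t₀)
      have harg : (fun s : ℝ => pdt U (s + (x₀ - t₀), s + (x₀ - t₀) - (x₀ - t₀)))
          = fun s : ℝ => pdt U (x₀ - t₀ + s, s) := by
        funext s
        have h2 : s + (x₀ - t₀) - (x₀ - t₀) = s := by ring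
        rw [h2, add_comm s (x₀ - t₀)]
      rw [harg, show (0:ℝ) + (x₀ - t₀) = x₀ - t₀ by ring,
        show t₀ + (x₀ - t₀) = x₀ by ring] at this
      exact this.symm
    · -- right piece
      have hcongr : (∫ y in x₀..(x₀ + t₀), pdt U (y, min (y - (x₀ - t₀)) ((x₀ + t₀) - y)))
          = ∫ y in x₀..(x₀ + t₀), pdt U (y, (x₀ + t₀) - y) := by
        apply intervalIntegral.integral_congr
        intro y hy
        rw [Set.uIcc_of_le (by linarith)] at hy
        dsimp only
        congr 1
        rw [min_eq_right (by simp only [Set.mem_Icc] at hy; linarith [hy.1])]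
      rw [hcongr]
      have := intervalIntegral.integral_comp_sub_left
        (a := (0:ℝ)) (b := t₀) (fun y => pdt U (y, (x₀ + t₀) - y)) (x₀ + t₀)
      have harg : (fun s : ℝ => pdt U ((x₀ + t₀) - s, (x₀ + t₀) - ((x₀ + t₀) - s)))
          = fun s : ℝ => pdt U (x₀ + t₀ - s, s) := by
        funext s
        have h2 : (x₀ + t₀) - ((x₀ + t₀) - s) = s := by ring
        rw [h2]
      rw [harg, show (x₀ + t₀) - t₀ = x₀ by ring,
        show (x₀ + t₀) - 0 = x₀ + t₀ by ring] at this
      exact this.symm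
  -- step 5 : FTC along the characteristics
  have step5 : (∫ s in (0:ℝ)..t₀,
        ((pdx U (x₀ - t₀ + s, s) + pdt U (x₀ - t₀ + s, s))
          + (-pdx U (x₀ + t₀ - s, s) + pdt U (x₀ + t₀ - s, s))))
      = 2 * U (x₀, t₀) - (U (x₀ - t₀, 0) + U (x₀ + t₀, 0)) := by
    have hderiv : ∀ s ∈ Set.uIcc (0:ℝ) t₀, HasDerivAt
        (fun s' => U (x₀ - t₀ + s', s') + U (x₀ + t₀ - s', s'))
        ((pdx U (x₀ - t₀ + s, s) + pdt U (x₀ - t₀ + s, s))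
          + (-pdx U (x₀ + t₀ - s, s) + pdt U (x₀ + t₀ - s, s))) s := by
      intro s _
      have hγ1 : HasDerivAt (fun s' : ℝ => (x₀ - t₀ + s', s')) ((1:ℝ), (1:ℝ)) s :=
        ((hasDerivAt_id s).const_add (x₀ - t₀)).prodMk (hasDerivAt_id s)
      have hγ2 : HasDerivAt (fun s' : ℝ => (x₀ + t₀ - s', s')) ((-1:ℝ), (1:ℝ)) s :=
        ((hasDerivAt_id s).const_sub (x₀ + t₀)).prodMk (hasDerivAt_id s)
      have h1 := hasDerivAt_comp_curve hU hγ1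
      have h2 := hasDerivAt_comp_curve hU hγ2
      simp only [one_mul, neg_one_mul] at h1 h2
      exact h1.add h2
    have := intervalIntegral.integral_eq_sub_of_hasDerivAt hderiv
      (((c1.add c2).add ((c3.neg).add c4)).intervalIntegrable _ _)
    rw [this]
    have e1 : x₀ - t₀ + t₀ = x₀ := by ring
    have e2 : x₀ + t₀ - t₀ = x₀ := by ring
    have e3 : x₀ - t₀ + 0 = x₀ - t₀ := by ring
    have e4 : x₀ + t₀ - 0 = x₀ + t₀ := by ring
    rw [e1, e2, e3, e4]
    ring
  -- combine everything
  have comb : (∫ s in (0:ℝ)..t₀, ∫ y in (x₀ - t₀ + s)..(x₀ + t₀ - s), G (y, s))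
      = 2 * U (x₀, t₀) - (U (x₀ - t₀, 0) + U (x₀ + t₀, 0))
        - ∫ y in (x₀ - t₀)..(x₀ + t₀), pdt U (y, 0) := by
    rw [step2, step3, step4]
    rw [← step5]
    rw [intervalIntegral.integral_sub (c3.intervalIntegrable _ _) (c1.intervalIntegrable _ _)]
    rw [intervalIntegral.integral_add
      (show IntervalIntegrable (fun s => pdx U (x₀ - t₀ + s, s) + pdt U (x₀ - t₀ + s, s)) volume 0 t₀
        from (c1.add c2).intervalIntegrable _ _)
      (show IntervalIntegrable (fun s => -pdx U (x₀ + t₀ - s, s) + pdt U (x₀ + t₀ - s, s)) volume 0 t₀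
        from ((c3.neg).add c4).intervalIntegrable _ _)]
    rw [intervalIntegral.integral_add (c1.intervalIntegrable _ _) (c2.intervalIntegrable _ _)]
    rw [intervalIntegral.integral_add
      (show IntervalIntegrable (fun s => -pdx U (x₀ + t₀ - s, s)) volume 0 t₀
        from (c3.neg).intervalIntegrable _ _) (c4.intervalIntegrable _ _)]
    rw [intervalIntegral.integral_neg]
    ring
  have := comb
  linarith [this]

lemma KT_isCompact (κ T : ℝ) : IsCompact (KT κ T) := by
  apply IsCompact.of_isClosed_subset
    ((isCompact_Icc (a := -κ) (b := κ)).prod (isCompact_Icc (a := (0:ℝ)) (b := T)))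
  · have h1 : IsClosed {p : ℝ × ℝ | 0 ≤ p.2} := isClosed_le continuous_const continuous_snd
    have h2 : IsClosed {p : ℝ × ℝ | p.2 ≤ T} := isClosed_le continuous_snd continuous_const
    have h3 : IsClosed {p : ℝ × ℝ | |p.1| ≤ κ - p.2} :=
      isClosed_le (continuous_fst.abs) (continuous_const.sub continuous_snd)
    have : KT κ T = ({p : ℝ × ℝ | 0 ≤ p.2} ∩ {p | p.2 ≤ T}) ∩ {p | |p.1| ≤ κ - p.2} := by
      ext p; simp only [KT, Set.mem_setOf_eq, Set.mem_inter_iff]; tauto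
    rw [this]
    exact (h1.inter h2).inter h3
  · rintro ⟨x, t⟩ ⟨h0, hT, hx⟩
    simp only [Set.mem_prod, Set.mem_Icc]
    rw [abs_le] at hx
    exact ⟨⟨by simp only at h0 hx ⊢; linarith [hx.1], by simp only at h0 hx ⊢; linarith [hx.2]⟩, h0, hT⟩

lemma KT_mem_zero (κ T : ℝ) (hκ : 0 < κ) (hT : 0 ≤ T) : ((0:ℝ), (0:ℝ)) ∈ KT κ T := by
  refine ⟨le_refl _, hT, ?_⟩
  simp only [abs_zero]
  linarith

lemma gron
    (f : ℝ → ℝ) (hfc : Continuous f) (L : ℝ) (hL0 : 0 ≤ L)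
    (hLip : ∀ p q : ℝ, |f p - f q| ≤ L * |p - q|)
    (κ T : ℝ) (hκ : 0 < κ) (hT0 : 0 ≤ T) (hTκ : T ≤ κ)
    (U W : ℝ × ℝ → ℝ) (hUc : Continuous U) (hWc : Continuous W)
    (HU HW : ℝ × ℝ → ℝ) (hHUc : Continuous HU) (hHWc : Continuous HW)
    (aU aW bU bW : ℝ → ℝ) (hbUc : Continuous bU) (hbWc : Continuous bW)
    (heqU : ∀ x t : ℝ, 0 ≤ t →
      U (x, t) = (1/2) * (aU (x - t) + aU (x + t))
        + (1/2) * (∫ y in (x - t)..(x + t), bU y)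
        + (1/2) * ∫ s in (0:ℝ)..t, ∫ y in (x - t + s)..(x + t - s), (f (U (y, s)) + HU (y, s)))
    (heqW : ∀ x t : ℝ, 0 ≤ t →
      W (x, t) = (1/2) * (aW (x - t) + aW (x + t))
        + (1/2) * (∫ y in (x - t)..(x + t), bW y)
        + (1/2) * ∫ s in (0:ℝ)..t, ∫ y in (x - t + s)..(x + t - s), (f (W (y, s)) + HW (y, s)))
    (δa δb δh : ℝ)
    (hδa : ∀ x ∈ Set.Icc (-κ) κ, |aU x - aW x| ≤ δa)
    (hδb : ∀ x ∈ Set.Icc (-κ) κ, |bU x - bW x| ≤ δb)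
    (hδh : ∀ p ∈ KT κ T, |HU p - HW p| ≤ δh) :
    ∀ p ∈ KT κ T, |U p - W p| ≤
      2 * (δa + κ * δb + κ^2 * δh) * rexp ((2 * (κ * L) + 1) * κ) := by
  have hδa0 : 0 ≤ δa := le_trans (abs_nonneg _) (hδa 0 ⟨by linarith, by linarith⟩)
  have hδb0 : 0 ≤ δb := le_trans (abs_nonneg _) (hδb 0 ⟨by linarith, by linarith⟩)
  have hδh0 : 0 ≤ δh := le_trans (abs_nonneg _) (hδh (0, 0) (KT_mem_zero κ T hκ hT0))
  set lam : ℝ := 2 * (κ * L) + 1 with hlam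
  have hlam0 : 0 < lam := by positivity
  set A : ℝ := δa + κ * δb + κ^2 * δh with hA
  have hA0 : 0 ≤ A := by positivity
  set K := KT κ T
  have hKc : IsCompact K := KT_isCompact κ T
  have hK0 : ((0:ℝ), (0:ℝ)) ∈ K := KT_mem_zero κ T hκ hT0
  obtain ⟨B₁, hB₁⟩ := hKc.exists_bound_of_continuousOn hUc.continuousOn
  obtain ⟨B₂, hB₂⟩ := hKc.exists_bound_of_continuousOn hWc.continuousOn
  set E : Set ℝ := (fun p : ℝ × ℝ => |U p - W p| * rexp (-lam * p.2)) '' K with hE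
  have hEne : E.Nonempty := ⟨_, ⟨(0, 0), hK0, rfl⟩⟩
  have hEbdd : BddAbove E := by
    refine ⟨B₁ + B₂, ?_⟩
    rintro x ⟨p, hp, rfl⟩
    have h1 : |U p - W p| ≤ B₁ + B₂ := by
      calc |U p - W p| ≤ ‖U p‖ + ‖W p‖ := abs_sub _ _
        _ ≤ B₁ + B₂ := add_le_add (hB₁ p hp) (hB₂ p hp)
    have h2 : rexp (-lam * p.2) ≤ 1 := by
      rw [Real.exp_le_one_iff]
      have := hp.1
      nlinarith [hp.1]
    calc |U p - W p| * rexp (-lam * p.2) ≤ (B₁ + B₂) * 1 :=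
        mul_le_mul h1 h2 (le_of_lt (Real.exp_pos _)) (le_trans (abs_nonneg _) h1)
      _ = B₁ + B₂ := mul_one _
  set M : ℝ := sSup E with hM
  have hMge : ∀ p ∈ K, |U p - W p| * rexp (-lam * p.2) ≤ M :=
    fun p hp => le_csSup hEbdd ⟨p, hp, rfl⟩
  have hM0 : 0 ≤ M := le_trans (by positivity) (hMge (0, 0) hK0)
  have hdM : ∀ p ∈ K, |U p - W p| ≤ M * rexp (lam * p.2) := by
    intro p hp
    have h := mul_le_mul_of_nonneg_right (hMge p hp) (le_of_lt (Real.exp_pos (lam * p.2)))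
    rw [mul_assoc, ← Real.exp_add] at h
    simp only [neg_mul, neg_add_cancel, Real.exp_zero, mul_one] at h
    exact h
  -- the key integral estimate
  have key : ∀ p ∈ K, |U p - W p| ≤ A + (κ * L / lam) * M * rexp (lam * p.2) := by
    rintro ⟨x, t⟩ hp
    obtain ⟨ht0, htT, hxt⟩ := hp
    simp only at ht0 htT hxt
    have htκ : t ≤ κ := le_trans htT hTκ
    rw [heqU x t ht0, heqW x t ht0]
    set gU : ℝ × ℝ → ℝ := fun q => f (U q) + HU q with hgU
    set gW : ℝ × ℝ → ℝ := fun q => f (W q) + HW q with hgW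
    have hgUc : Continuous gU := (hfc.comp hUc).add hHUc
    have hgWc : Continuous gW := (hfc.comp hWc).add hHWc
    have habs : ∀ y : ℝ, y ∈ Set.Icc (x - t) (x + t) → y ∈ Set.Icc (-κ) κ := by
      intro y hy
      rw [abs_le] at hxt
      exact ⟨by linarith [hy.1, hxt.1], by linarith [hy.2, hxt.2]⟩
    -- the three difference terms
    have E1 : |(1/2) * (aU (x - t) + aU (x + t)) - (1/2) * (aW (x - t) + aW (x + t))| ≤ δa := by
      have h1 := hδa (x - t) (habs _ ⟨le_refl _, by linarith⟩)
      have h2 := hδa (x + t) (habs _ ⟨by linarith, le_refl _⟩)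
      rw [abs_le] at h1 h2 ⊢
      constructor <;> [nlinarith [h1.1, h2.1]; nlinarith [h1.2, h2.2]]
    have E2 : |(1/2) * (∫ y in (x - t)..(x + t), bU y)
        - (1/2) * ∫ y in (x - t)..(x + t), bW y| ≤ κ * δb := by
      rw [← mul_sub]
      rw [← intervalIntegral.integral_sub (hbUc.intervalIntegrable _ _) (hbWc.intervalIntegrable _ _)]
      have hb : ‖∫ y in (x - t)..(x + t), (bU y - bW y)‖ ≤ δb * |(x + t) - (x - t)| := by
        apply intervalIntegral.norm_integral_le_of_norm_le_const
        intro y hy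
        rw [Set.uIoc_of_le (by linarith)] at hy
        exact hδb y (habs y ⟨le_of_lt hy.1, hy.2⟩)
      rw [abs_mul]
      rw [Real.norm_eq_abs] at hb
      have : |(x + t) - (x - t)| = 2 * t := by rw [abs_of_nonneg (by linarith)]; ring
      rw [this] at hb
      calc |(1:ℝ)/2| * |∫ y in (x - t)..(x + t), (bU y - bW y)|
          ≤ (1/2) * (δb * (2 * t)) := by
            rw [show |(1:ℝ)/2| = 1/2 by norm_num]
            exact mul_le_mul_of_nonneg_left hb (by norm_num)
        _ = t * δb := by ring
        _ ≤ κ * δb := mul_le_mul_of_nonneg_right htκ hδb0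
    have E3 : |(1/2) * (∫ s in (0:ℝ)..t, ∫ y in (x - t + s)..(x + t - s), gU (y, s))
        - (1/2) * ∫ s in (0:ℝ)..t, ∫ y in (x - t + s)..(x + t - s), gW (y, s)|
        ≤ κ^2 * δh + (κ * L / lam) * M * rexp (lam * t) := by
      rw [← mul_sub]
      rw [← intervalIntegral.integral_sub (paramIntegrable gU hgUc x t ht0)
        (paramIntegrable gW hgWc x t ht0)]
      -- rewrite inner difference
      have hinner : ∀ s ∈ Set.uIcc (0:ℝ) t,
          ((∫ y in (x - t + s)..(x + t - s), gU (y, s))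
            - ∫ y in (x - t + s)..(x + t - s), gW (y, s))
          = ∫ y in (x - t + s)..(x + t - s), (gU (y, s) - gW (y, s)) := by
        intro s _
        have cgU : Continuous fun y : ℝ => gU (y, s) := by
          exact hgUc.comp (continuous_id.prodMk continuous_const)
        have cgW : Continuous fun y : ℝ => gW (y, s) := by
          exact hgWc.comp (continuous_id.prodMk continuous_const)
        rw [intervalIntegral.integral_sub (cgU.intervalIntegrable _ _)
          (cgW.intervalIntegrable _ _)]
      rw [intervalIntegral.integral_congr hinner]
      -- now bound
      have hptwise : ∀ s ∈ Set.Icc (0:ℝ) t,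
          |∫ y in (x - t + s)..(x + t - s), (gU (y, s) - gW (y, s))|
            ≤ 2 * κ * (L * (M * rexp (lam * s)) + δh) := by
        intro s hs
        have hsK : ∀ y ∈ Set.uIoc (x - t + s) (x + t - s), (y, s) ∈ K := by
          intro y hy
          rw [Set.uIoc_of_le (by linarith [hs.1, hs.2])] at hy
          rw [abs_le] at hxt
          refine ⟨hs.1, le_trans hs.2 htT, ?_⟩
          rw [abs_le]
          exact ⟨by linarith [hy.1, hxt.1], by linarith [hy.2, hxt.2]⟩
        have hbound : ‖∫ y in (x - t + s)..(x + t - s), (gU (y, s) - gW (y, s))‖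
            ≤ (L * (M * rexp (lam * s)) + δh) * |(x + t - s) - (x - t + s)| := by
          apply intervalIntegral.norm_integral_le_of_norm_le_const
          intro y hy
          have hyK := hsK y hy
          have h1 : |f (U (y, s)) - f (W (y, s))| ≤ L * |U (y, s) - W (y, s)| :=
            hLip (U (y, s)) (W (y, s))
          have h2 : |U (y, s) - W (y, s)| ≤ M * rexp (lam * s) := hdM (y, s) hyK
          have h3 : |HU (y, s) - HW (y, s)| ≤ δh := hδh (y, s) hyK
          have : gU (y, s) - gW (y, s)
              = (f (U (y, s)) - f (W (y, s))) + (HU (y, s) - HW (y, s)) := by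
            simp only [hgU, hgW]; ring
          rw [Real.norm_eq_abs, this]
          calc |(f (U (y, s)) - f (W (y, s))) + (HU (y, s) - HW (y, s))|
              ≤ |f (U (y, s)) - f (W (y, s))| + |HU (y, s) - HW (y, s)| := abs_add_le _ _
            _ ≤ L * (M * rexp (lam * s)) + δh := by
                refine add_le_add (le_trans h1 ?_) h3
                exact mul_le_mul_of_nonneg_left h2 hL0
        have habs2 : |(x + t - s) - (x - t + s)| ≤ 2 * κ := by
          rw [abs_of_nonneg (by linarith [hs.1, hs.2])]
          linarith [hs.1, htκ]
        rw [Real.norm_eq_abs] at hbound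
        calc |∫ y in (x - t + s)..(x + t - s), (gU (y, s) - gW (y, s))|
            ≤ (L * (M * rexp (lam * s)) + δh) * |(x + t - s) - (x - t + s)| := hbound
          _ ≤ (L * (M * rexp (lam * s)) + δh) * (2 * κ) := by
              apply mul_le_mul_of_nonneg_left habs2
              positivity
          _ = 2 * κ * (L * (M * rexp (lam * s)) + δh) := by ring
      -- integrate the bound
      have hintabs : IntervalIntegrable
          (fun s => |∫ y in (x - t + s)..(x + t - s), (gU (y, s) - gW (y, s))|) volume 0 t :=
        (paramIntegrable (fun q => gU q - gW q) (hgUc.sub hgWc) x t ht0).abs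
      have hg2 : IntervalIntegrable (fun s => 2 * κ * (L * (M * rexp (lam * s)) + δh)) volume 0 t := by
        apply Continuous.intervalIntegrable
        fun_prop
      have hmono := intervalIntegral.integral_mono_on ht0 hintabs hg2 hptwise
      have habsint := intervalIntegral.abs_integral_le_integral_abs
        (μ := volume) (f := fun s => ∫ y in (x - t + s)..(x + t - s), (gU (y, s) - gW (y, s))) ht0
      -- compute the RHS integral
      have hexp : (∫ s in (0:ℝ)..t, rexp (lam * s)) = (rexp (lam * t) - 1) / lam := by
        have hd : ∀ s ∈ Set.uIcc (0:ℝ) t, HasDerivAt (fun s' => rexp (lam * s') / lam)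
            (rexp (lam * s)) s := by
          intro s _
          have h1 : HasDerivAt (fun s' : ℝ => lam * s') lam s := by
            simpa using (hasDerivAt_id s).const_mul lam
          have h2 := (Real.hasDerivAt_exp (lam * s)).comp s h1
          have h3 := h2.div_const lam
          have : rexp (lam * s) * lam / lam = rexp (lam * s) := by
            field_simp
          rwa [this] at h3
        rw [intervalIntegral.integral_eq_sub_of_hasDerivAt hd
          ((Real.continuous_exp.comp (continuous_const.mul continuous_id)).intervalIntegrable _ _)]
        rw [mul_zero, Real.exp_zero]
        ring
      have hcompute : (∫ s in (0:ℝ)..t, 2 * κ * (L * (M * rexp (lam * s)) + δh))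
          = 2 * κ * L * M * ((rexp (lam * t) - 1) / lam) + 2 * κ * δh * t := by
        rw [intervalIntegral.integral_const_mul]
        rw [intervalIntegral.integral_add (by apply Continuous.intervalIntegrable; continuity)
          (intervalIntegrable_const)]
        rw [intervalIntegral.integral_const_mul]
        rw [intervalIntegral.integral_const_mul]
        rw [hexp, intervalIntegral.integral_const]
        simp only [smul_eq_mul, sub_zero]
        ring
      have hfinal : |∫ s in (0:ℝ)..t, ∫ y in (x - t + s)..(x + t - s), (gU (y, s) - gW (y, s))|
          ≤ 2 * κ * L * M * ((rexp (lam * t) - 1) / lam) + 2 * κ * δh * t := by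
        calc |∫ s in (0:ℝ)..t, ∫ y in (x - t + s)..(x + t - s), (gU (y, s) - gW (y, s))|
            ≤ ∫ s in (0:ℝ)..t, |∫ y in (x - t + s)..(x + t - s), (gU (y, s) - gW (y, s))| := habsint
          _ ≤ ∫ s in (0:ℝ)..t, 2 * κ * (L * (M * rexp (lam * s)) + δh) := hmono
          _ = _ := hcompute
      rw [abs_mul, show |(1:ℝ)/2| = 1/2 by norm_num]
      have hstep := mul_le_mul_of_nonneg_left hfinal (by norm_num : (0:ℝ) ≤ 1/2)
      calc (1/2) * |∫ s in (0:ℝ)..t, ∫ y in (x - t + s)..(x + t - s), (gU (y, s) - gW (y, s))|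
          ≤ (1/2) * (2 * κ * L * M * ((rexp (lam * t) - 1) / lam) + 2 * κ * δh * t) := hstep
        _ = κ * L * M * ((rexp (lam * t) - 1) / lam) + κ * δh * t := by ring
        _ ≤ κ^2 * δh + (κ * L / lam) * M * rexp (lam * t) := by
            have h1 : κ * δh * t ≤ κ^2 * δh := by
              nlinarith [mul_le_mul_of_nonneg_left htκ (mul_nonneg hκ.le hδh0)]
            have h2 : κ * L * M * ((rexp (lam * t) - 1) / lam)
                ≤ (κ * L / lam) * M * rexp (lam * t) := by
              have hstep2 : κ * L * M * ((rexp (lam * t) - 1) / lam)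
                  ≤ κ * L * M * (rexp (lam * t) / lam) := by
                apply mul_le_mul_of_nonneg_left _ (by positivity : (0:ℝ) ≤ κ * L * M)
                exact (div_le_div_iff_of_pos_right hlam0).2 (by linarith)
              calc κ * L * M * ((rexp (lam * t) - 1) / lam)
                  ≤ κ * L * M * (rexp (lam * t) / lam) := hstep2
                _ = (κ * L / lam) * M * rexp (lam * t) := by ring
            linarith
    -- combine
    calc |((1/2) * (aU (x - t) + aU (x + t))
          + (1/2) * (∫ y in (x - t)..(x + t), bU y)
          + (1/2) * ∫ s in (0:ℝ)..t, ∫ y in (x - t + s)..(x + t - s), gU (y, s))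
        - ((1/2) * (aW (x - t) + aW (x + t))
          + (1/2) * (∫ y in (x - t)..(x + t), bW y)
          + (1/2) * ∫ s in (0:ℝ)..t, ∫ y in (x - t + s)..(x + t - s), gW (y, s))|
        ≤ |(1/2) * (aU (x - t) + aU (x + t)) - (1/2) * (aW (x - t) + aW (x + t))|
          + |(1/2) * (∫ y in (x - t)..(x + t), bU y) - (1/2) * ∫ y in (x - t)..(x + t), bW y|
          + |(1/2) * (∫ s in (0:ℝ)..t, ∫ y in (x - t + s)..(x + t - s), gU (y, s))
            - (1/2) * ∫ s in (0:ℝ)..t, ∫ y in (x - t + s)..(x + t - s), gW (y, s)| := by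
          apply (abs_add_three _ _ _).trans_eq'
          congr 1
          ring
      _ ≤ δa + κ * δb + (κ^2 * δh + (κ * L / lam) * M * rexp (lam * t)) :=
          add_le_add (add_le_add E1 E2) E3
      _ = A + (κ * L / lam) * M * rexp (lam * t) := by rw [hA]; ring
  -- close the Gronwall loop
  have hMbound : M ≤ A + (κ * L / lam) * M := by
    apply csSup_le hEne
    rintro x ⟨p, hp, rfl⟩
    have h1 := key p hp
    have h2 : rexp (-lam * p.2) ≤ 1 := by
      rw [Real.exp_le_one_iff]
      nlinarith [hp.1]
    have h3 : (0:ℝ) < rexp (-lam * p.2) := Real.exp_pos _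
    calc |U p - W p| * rexp (-lam * p.2)
        ≤ (A + (κ * L / lam) * M * rexp (lam * p.2)) * rexp (-lam * p.2) :=
          mul_le_mul_of_nonneg_right h1 h3.le
      _ = A * rexp (-lam * p.2) + (κ * L / lam) * M * (rexp (lam * p.2) * rexp (-lam * p.2)) := by
          ring
      _ = A * rexp (-lam * p.2) + (κ * L / lam) * M := by
          rw [← Real.exp_add]
          simp
      _ ≤ A + (κ * L / lam) * M := by
          have hthis := mul_le_mul_of_nonneg_left h2 hA0
          rw [mul_one] at hthis
          linarith [hthis]
  have hfrac : κ * L / lam ≤ 1/2 := by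
    rw [div_le_iff₀ hlam0]
    nlinarith
  have hM2A : M ≤ 2 * A := by
    have h1 : (κ * L / lam) * M ≤ (1/2) * M :=
      mul_le_mul_of_nonneg_right hfrac hM0
    linarith
  intro p hp
  calc |U p - W p| ≤ M * rexp (lam * p.2) := hdM p hp
    _ ≤ 2 * A * rexp (lam * κ) := by
        apply mul_le_mul hM2A _ (Real.exp_pos _).le (by positivity)
        apply Real.exp_le_exp.2
        have := hp.2.1
        have h2 := hp.1
        nlinarith [le_trans hp.2.1 hTκ]
    _ = 2 * (δa + κ * δb + κ^2 * δh) * rexp ((2 * (κ * L) + 1) * κ) := by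
        rw [hA, hlam, mul_comm lam κ]

/-- main -/
theorem continuous_data_uniform_convergence
    (f : ℝ → ℝ) (hf : Admissible f)
    (a b : ℝ → ℝ) (ha : Continuous a) (hb : Continuous b)
    (h : ℝ × ℝ → ℝ) (hh : ContinuousOn h {p : ℝ × ℝ | 0 ≤ p.2})
    (w : ℝ × ℝ → ℝ) (hwcont : ContinuousOn w {p : ℝ × ℝ | 0 ≤ p.2})
    (hweq : ∀ x t : ℝ, 0 ≤ t →
      w (x, t) = (1/2) * (a (x - t) + a (x + t))
        + (1/2) * (∫ y in (x - t)..(x + t), b y)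
        + (1/2) * ∫ s in (0:ℝ)..t, ∫ y in (x - t + s)..(x + t - s),
            (f (w (y, s)) + h (y, s)))
    (aN bN : ℝ → ℝ → ℝ) (hN : ℝ → ℝ × ℝ → ℝ)
    (haNsmooth : ∀ ε ∈ Set.Ioc (0:ℝ) 1, ContDiff ℝ (⊤ : ℕ∞) (aN ε))
    (hbNsmooth : ∀ ε ∈ Set.Ioc (0:ℝ) 1, ContDiff ℝ (⊤ : ℕ∞) (bN ε))
    (hhNsmooth : ∀ ε ∈ Set.Ioc (0:ℝ) 1, ContDiff ℝ (⊤ : ℕ∞) (hN ε))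
    (haNconv : ∀ K : Set ℝ, IsCompact K → TendstoUniformlyOn aN a (𝓝[>] (0:ℝ)) K)
    (hbNconv : ∀ K : Set ℝ, IsCompact K → TendstoUniformlyOn bN b (𝓝[>] (0:ℝ)) K)
    (hhNconv : ∀ K : Set (ℝ × ℝ), K ⊆ {p : ℝ × ℝ | 0 ≤ p.2} → IsCompact K →
      TendstoUniformlyOn hN h (𝓝[>] (0:ℝ)) K)
    (u : ℝ → ℝ × ℝ → ℝ)
    (husmooth : ∀ ε ∈ Set.Ioc (0:ℝ) 1, ContDiff ℝ (⊤ : ℕ∞) (u ε))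
    (hpde : ∀ ε ∈ Set.Ioc (0:ℝ) 1, ∀ p : ℝ × ℝ, waveOp (u ε) p = f (u ε p) + hN ε p)
    (hinit0 : ∀ ε ∈ Set.Ioc (0:ℝ) 1, ∀ x : ℝ, u ε (x, 0) = aN ε x)
    (hinit1 : ∀ ε ∈ Set.Ioc (0:ℝ) 1, ∀ x : ℝ, deriv (fun s => u ε (x, s)) 0 = bN ε x) :
    ∀ κ : ℝ, 0 < κ → ∀ T : ℝ, 0 ≤ T → T ≤ κ →
      TendstoUniformlyOn u w (𝓝[>] (0:ℝ)) (KT κ T) := by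
  intro κ hκ T hT0 hTκ
  -- Lipschitz data for f
  have hfc : Continuous f := hf.1.continuous
  obtain ⟨L₀, hL₀⟩ := hf.2.2.1
  set L : ℝ := L₀ with hLdef
  have hL0 : 0 ≤ L := le_trans (abs_nonneg _) (hL₀ 0)
  have hLip : ∀ p q : ℝ, |f p - f q| ≤ L * |p - q| := by
    intro p q
    have hdiff : ∀ x ∈ (Set.univ : Set ℝ), DifferentiableAt ℝ f x := fun x _ =>
      (hf.1.differentiable (by simp)).differentiableAt
    have hbd : ∀ x ∈ (Set.univ : Set ℝ), ‖deriv f x‖ ≤ L := fun x _ => by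
      simpa [Real.norm_eq_abs] using hL₀ x
    simpa [Real.norm_eq_abs] using
      convex_univ.norm_image_sub_le_of_norm_deriv_le hdiff hbd (Set.mem_univ q) (Set.mem_univ p)
  -- truncated continuous extensions of w and h
  set Wh : ℝ × ℝ → ℝ := fun p => w (p.1, max p.2 0) with hWh
  set Hh : ℝ × ℝ → ℝ := fun p => h (p.1, max p.2 0) with hHh
  have hmaps : ∀ p : ℝ × ℝ, ((p.1, max p.2 0) : ℝ × ℝ) ∈ {p : ℝ × ℝ | 0 ≤ p.2} := by
    intro p
    simp only [Set.mem_setOf_eq]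
    exact le_max_right _ _
  have hWhc : Continuous Wh := by
    exact hwcont.comp_continuous (continuous_fst.prodMk (continuous_snd.max continuous_const)) hmaps
  have hHhc : Continuous Hh := by
    exact hh.comp_continuous (continuous_fst.prodMk (continuous_snd.max continuous_const)) hmaps
  have hWheq : ∀ x t : ℝ, 0 ≤ t → Wh (x, t) = w (x, t) := by
    intro x t ht; simp only [hWh, max_eq_left ht]
  have hHheq : ∀ x t : ℝ, 0 ≤ t → Hh (x, t) = h (x, t) := by
    intro x t ht; simp only [hHh, max_eq_left ht]
  have heqW : ∀ x t : ℝ, 0 ≤ t →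
      Wh (x, t) = (1/2) * (a (x - t) + a (x + t))
        + (1/2) * (∫ y in (x - t)..(x + t), b y)
        + (1/2) * ∫ s in (0:ℝ)..t, ∫ y in (x - t + s)..(x + t - s),
            (f (Wh (y, s)) + Hh (y, s)) := by
    intro x t ht
    rw [hWheq x t ht, hweq x t ht]
    congr 1
    apply congrArg
    apply intervalIntegral.integral_congr
    intro s hs
    rw [Set.uIcc_of_le ht] at hs
    apply intervalIntegral.integral_congr
    intro y _
    dsimp only
    rw [hWheq y s hs.1, hHheq y s hs.1]
  -- metric formulation
  rw [Metric.tendstoUniformlyOn_iff]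
  intro δ hδ
  set Econ : ℝ := rexp ((2 * (κ * L) + 1) * κ) with hEcon
  have hEcon0 : 0 < Econ := Real.exp_pos _
  set δ' : ℝ := δ / (2 * (2 * (1 + κ + κ^2) * Econ)) with hδ'
  have hδ'0 : 0 < δ' := by positivity
  have h1 := haNconv (Set.Icc (-κ) κ) isCompact_Icc
  have h2 := hbNconv (Set.Icc (-κ) κ) isCompact_Icc
  have h3 := hhNconv (KT κ T) (fun p hp => hp.1) (KT_isCompact κ T)
  rw [Metric.tendstoUniformlyOn_iff] at h1 h2 h3
  filter_upwards [h1 δ' hδ'0, h2 δ' hδ'0, h3 δ' hδ'0,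
    Ioc_mem_nhdsGT_of_mem (show (0:ℝ) ∈ Set.Ico (0:ℝ) 1 by constructor <;> norm_num)]
    with ε hε1 hε2 hε3 hεIoc
  -- the integral equation for u ε
  have hUsm := husmooth ε hεIoc
  have hUc : Continuous (u ε) := hUsm.continuous
  have hGc : Continuous (fun p : ℝ × ℝ => f (u ε p) + hN ε p) :=
    (hfc.comp hUc).add (hhNsmooth ε hεIoc).continuous
  have heqU : ∀ x t : ℝ, 0 ≤ t →
      u ε (x, t) = (1/2) * (aN ε (x - t) + aN ε (x + t))
        + (1/2) * (∫ y in (x - t)..(x + t), bN ε y)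
        + (1/2) * ∫ s in (0:ℝ)..t, ∫ y in (x - t + s)..(x + t - s),
            (f (u ε (y, s)) + hN ε (y, s)) := by
    intro x t ht
    have hd := duhamel (u ε) hUsm (fun p => f (u ε p) + hN ε p) hGc
      (hpde ε hεIoc) x t ht
    rw [hinit0 ε hεIoc (x - t), hinit0 ε hεIoc (x + t)] at hd
    have hbfun : (fun y : ℝ => pdt (u ε) (y, 0)) = bN ε := by
      funext y
      rw [← hinit1 ε hεIoc y]
      exact ((hasDerivAt_slicet hUsm y 0).deriv).symm
    rw [hbfun] at hd
    exact hd
  -- apply the comparison lemma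
  have hmain := gron f hfc L hL0 hLip κ T hκ hT0 hTκ
    (u ε) Wh hUc hWhc (hN ε) Hh (hhNsmooth ε hεIoc).continuous hHhc
    (aN ε) a (bN ε) b (hbNsmooth ε hεIoc).continuous hb
    heqU heqW δ' δ' δ'
    (fun x hx => le_of_lt (by rw [← Real.dist_eq, dist_comm]; exact hε1 x hx))
    (fun x hx => le_of_lt (by rw [← Real.dist_eq, dist_comm]; exact hε2 x hx))
    (fun p hp => le_of_lt (by
      rw [hHheq p.1 p.2 hp.1, ← Real.dist_eq, dist_comm]
      exact hε3 p hp))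
  intro p hp
  have hb1 := hmain p hp
  have hwp : Wh p = w p := hWheq p.1 p.2 hp.1
  rw [Real.dist_eq]
  have : |w p - u ε p| = |u ε p - Wh p| := by rw [hwp, abs_sub_comm]
  rw [this]
  calc |u ε p - Wh p| ≤ 2 * (δ' + κ * δ' + κ^2 * δ') * Econ := hb1
    _ = 2 * (1 + κ + κ^2) * Econ * δ' := by ring
    _ = δ / 2 := by
        rw [hδ']
        field_simp
    _ < δ := by linarith
end
end

section
/- Let Ω ⊆ ℝⁿ be open and let f : ℝ → ℝ be smooth such that every derivative of f grows at most polynomially at infinity. If (u_ε)_{ε∈(0,1]} is a moderate net of smooth functions on Ω, then (f ∘ u_ε)_{ε∈(0,1]} is a moderate net of smooth functions on Ω. -/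
open Real Set Filter MeasureTheory Topology

noncomputable section

/-- A moderate net of smooth functions on an open set `Ω`. -/
def ModerateOn {E : Type*} [NormedAddCommGroup E] [NormedSpace ℝ E]
    (Ω : Set E) (u : ℝ → E → ℝ) : Prop :=
  (∀ ε ∈ Set.Ioc (0:ℝ) 1, ContDiffOn ℝ (⊤ : ℕ∞) (u ε) Ω) ∧
  ∀ K : Set E, K ⊆ Ω → IsCompact K → ∀ k : ℕ,
    ∃ p : ℝ, 0 ≤ p ∧ ∃ C : ℝ, 0 < C ∧ ∃ ε₀ : ℝ, 0 < ε₀ ∧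
      ∀ ε ∈ Set.Ioc (0:ℝ) 1, ε ≤ ε₀ → ∀ x ∈ K,
        ‖iteratedFDerivWithin ℝ k (u ε) Ω x‖ ≤ C * ε ^ (-p)

/-- Superposition with a smooth, polynomially bounded function maps moderate
nets to moderate nets. -/
theorem superposition_moderate {n : ℕ}
    (Ω : Set (EuclideanSpace ℝ (Fin n))) (hΩ : IsOpen Ω)
    (f : ℝ → ℝ) (hf : ContDiff ℝ (⊤ : ℕ∞) f)
    (hpoly : ∀ k : ℕ, ∃ C : ℝ, 0 < C ∧ ∃ N : ℕ, ∀ y : ℝ,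
      |iteratedDeriv k f y| ≤ C * (1 + |y|) ^ N)
    (u : ℝ → EuclideanSpace ℝ (Fin n) → ℝ) (hu : ModerateOn Ω u) :
    ModerateOn Ω (fun ε x => f (u ε x)) := by
  obtain ⟨hsm, hmod⟩ := hu
  constructor
  · intro ε hε
    exact hf.comp_contDiffOn (hsm ε hε)
  intro K hKΩ hK k
  choose p hp C hC ε₀ hε₀ hbound using hmod K hKΩ hK
  choose Cf hCf N hN using hpoly
  -- aggregate constants over i ∈ range (k+1)
  set P : ℝ := ∑ i ∈ Finset.range (k+1), p i with hP
  set CM : ℝ := 1 + ∑ i ∈ Finset.range (k+1), C i with hCM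
  set CfM : ℝ := ∑ i ∈ Finset.range (k+1), Cf i with hCfM
  set Nm : ℕ := (Finset.range (k+1)).sup N with hNm
  have hP0 : 0 ≤ P := Finset.sum_nonneg fun i _ => hp i
  have hpP : ∀ i ≤ k, p i ≤ P := fun i hi =>
    Finset.single_le_sum (f := p) (fun j _ => hp j) (Finset.mem_range.2 (Nat.lt_succ_of_le hi))
  have hCM1 : (1:ℝ) ≤ CM := by
    have : 0 ≤ ∑ i ∈ Finset.range (k+1), C i :=
      Finset.sum_nonneg fun i _ => (hC i).le
    linarith
  have hCCM : ∀ i ≤ k, C i ≤ CM := fun i hi => by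
    have := Finset.single_le_sum (f := C) (fun j _ => (hC j).le)
      (Finset.mem_range.2 (Nat.lt_succ_of_le hi))
    linarith
  have hCfM0 : 0 < CfM :=
    Finset.sum_pos (fun i _ => hCf i) ⟨0, Finset.mem_range.2 (Nat.succ_pos k)⟩
  have hCfCfM : ∀ i ≤ k, Cf i ≤ CfM := fun i hi =>
    Finset.single_le_sum (f := Cf) (fun j _ => (hCf j).le)
      (Finset.mem_range.2 (Nat.lt_succ_of_le hi))
  have hNNm : ∀ i ≤ k, N i ≤ Nm := fun i hi =>
    Finset.le_sup (Finset.mem_range.2 (Nat.lt_succ_of_le hi))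
  refine ⟨p 0 * Nm + P * k,
    add_nonneg (mul_nonneg (hp 0) (Nat.cast_nonneg _)) (mul_nonneg hP0 (Nat.cast_nonneg _)),
    (Nat.factorial k : ℝ) * (CfM * (1 + C 0) ^ Nm) * CM ^ k,
    mul_pos (mul_pos (by exact_mod_cast Nat.factorial_pos k)
      (mul_pos hCfM0 (pow_pos (by linarith [hC 0]) Nm))) (pow_pos (by linarith) k),
    (Finset.range (k+1)).inf' (show (Finset.range (k+1)).Nonempty from ⟨0, Finset.mem_range.2 (Nat.succ_pos k)⟩) ε₀,
    ?_, ?_⟩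
  · rw [Finset.lt_inf'_iff]
    exact fun i _ => hε₀ i
  intro ε hε hεle x hx
  have hε0 : 0 < ε := hε.1
  have hε1 : ε ≤ 1 := hε.2
  have hεi : ∀ i ≤ k, ε ≤ ε₀ i := fun i hi =>
    hεle.trans (Finset.inf'_le _ (Finset.mem_range.2 (Nat.lt_succ_of_le hi)))
  have hmono : ∀ a b : ℝ, a ≤ b → ε ^ (-b) * 1 ≤ ε ^ (-b) ∧ ε ^ (-a) ≤ ε ^ (-b) := by
    intro a b hab
    exact ⟨by linarith [le_refl (ε ^ (-b))], Real.rpow_le_rpow_of_exponent_ge hε0 hε1 (by linarith)⟩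
  have hone : ∀ a : ℝ, 0 ≤ a → (1:ℝ) ≤ ε ^ (-a) := fun a ha =>
    Real.one_le_rpow_of_pos_of_le_one_of_nonpos hε0 hε1 (by linarith)
  have hUΩ : UniqueDiffOn ℝ Ω := hΩ.uniqueDiffOn
  -- the value bound
  have hval : |u ε x| ≤ C 0 * ε ^ (-(p 0)) := by
    have := hbound 0 ε hε (hεi 0 (Nat.zero_le k)) x hx
    rwa [norm_iteratedFDerivWithin_zero, Real.norm_eq_abs] at this
  -- bound on derivatives of f at u ε x
  have hCbnd : ∀ i, i ≤ k →
      ‖iteratedFDerivWithin ℝ i f univ (u ε x)‖ ≤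
        CfM * (1 + C 0) ^ Nm * ε ^ (-(p 0 * Nm)) := by
    intro i hi
    rw [iteratedFDerivWithin_univ, norm_iteratedFDeriv_eq_norm_iteratedDeriv, Real.norm_eq_abs]
    have h1 : |iteratedDeriv i f (u ε x)| ≤ Cf i * (1 + |u ε x|) ^ (N i) := hN i _
    have hb1 : (1:ℝ) ≤ (1 + C 0) * ε ^ (-(p 0)) := by
      have := hone (p 0) (hp 0)
      nlinarith [hC 0]
    have hb : 1 + |u ε x| ≤ (1 + C 0) * ε ^ (-(p 0)) := by
      have := hone (p 0) (hp 0)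
      nlinarith [hval]
    have h2 : (1 + |u ε x|) ^ (N i) ≤ ((1 + C 0) * ε ^ (-(p 0))) ^ Nm := by
      calc (1 + |u ε x|) ^ (N i) ≤ ((1 + C 0) * ε ^ (-(p 0))) ^ (N i) := by
            apply pow_le_pow_left₀ (by positivity) hb
        _ ≤ ((1 + C 0) * ε ^ (-(p 0))) ^ Nm := pow_le_pow_right₀ hb1 (hNNm i hi)
    have h3 : ((1 + C 0) * ε ^ (-(p 0))) ^ Nm
        = (1 + C 0) ^ Nm * ε ^ (-(p 0 * Nm)) := by
      rw [mul_pow, ← Real.rpow_natCast (ε ^ (-(p 0))) Nm, ← Real.rpow_mul hε0.le]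
      ring_nf
    calc |iteratedDeriv i f (u ε x)| ≤ Cf i * ((1 + C 0) * ε ^ (-(p 0))) ^ Nm := by
          refine h1.trans ?_
          exact mul_le_mul_of_nonneg_left h2 (hCf i).le
      _ ≤ CfM * ((1 + C 0) * ε ^ (-(p 0))) ^ Nm := by
          apply mul_le_mul_of_nonneg_right (hCfCfM i hi) (by positivity)
      _ = CfM * (1 + C 0) ^ Nm * ε ^ (-(p 0 * Nm)) := by rw [h3]; ring
  -- bound on derivatives of u
  have hDbnd : ∀ i, 1 ≤ i → i ≤ k →
      ‖iteratedFDerivWithin ℝ i (u ε) Ω x‖ ≤ (CM * ε ^ (-P)) ^ i := by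
    intro i h1i hik
    have hb := hbound i ε hε (hεi i hik) x hx
    have hD1 : (1:ℝ) ≤ CM * ε ^ (-P) := by
      have := hone P hP0
      nlinarith
    calc ‖iteratedFDerivWithin ℝ i (u ε) Ω x‖ ≤ C i * ε ^ (-(p i)) := hb
      _ ≤ CM * ε ^ (-P) := by
          have h1 := hCCM i hik
          have h2 : ε ^ (-(p i)) ≤ ε ^ (-P) :=
            Real.rpow_le_rpow_of_exponent_ge hε0 hε1 (by linarith [hpP i hik])
          have h3 : (0:ℝ) ≤ ε ^ (-(p i)) := by positivity
          nlinarith [hC i, hone P hP0]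
      _ ≤ (CM * ε ^ (-P)) ^ i := le_self_pow₀ hD1 (by omega)
  have hcomp := norm_iteratedFDerivWithin_comp_le (𝕜 := ℝ) (g := f) (f := u ε) (n := k)
    (s := Ω) (t := univ) hf.contDiffOn (hsm ε hε) (by exact_mod_cast le_top)
    uniqueDiffOn_univ hUΩ (mapsTo_univ _ _) (hKΩ hx) hCbnd hDbnd
  show ‖iteratedFDerivWithin ℝ k (f ∘ u ε) Ω x‖ ≤ _
  refine hcomp.trans (le_of_eq ?_)
  rw [show -(p 0 * (Nm:ℝ) + P * k) = -(p 0 * Nm) + -P * k by ring,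
    Real.rpow_add hε0, mul_pow, ← Real.rpow_natCast (ε ^ (-P)) k, ← Real.rpow_mul hε0.le]
  ring
end
end

section
/- Let φ ∈ S(ℝⁿ) satisfy ∫φ(x)dx = 1 and ∫x^α φ(x)dx = 0 for all multi-indices α with |α| ≥ 1, and set φ_ε(x) = ε^{−n}φ(x/ε). Let χ ∈ C_c^∞(ℝⁿ) be identically equal to 1 on a neighborhood of 0. Then for every f ∈ C^∞(ℝⁿ), the net u_ε(x) = ∫ f(x−y) χ(y) φ_ε(y) dy satisfies: (u_ε − f)_{ε∈(0,1]} is a null net on ℝⁿ, i.e., for every compact K ⊂ ℝⁿ, every multi-index α and every q ≥ 0, sup_{x∈K} |∂^α(u_ε − f)(x)| = O(ε^q) as ε → 0. -/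
open Real Set Filter MeasureTheory Topology

noncomputable section

/-- A null net of smooth functions: all derivatives tend to zero faster than
any power of `ε`, locally uniformly. -/
def NullNet {E : Type*} [NormedAddCommGroup E] [NormedSpace ℝ E]
    (u : ℝ → E → ℝ) : Prop :=
  (∀ ε ∈ Set.Ioc (0:ℝ) 1, ContDiff ℝ (⊤ : ℕ∞) (u ε)) ∧
  ∀ K : Set E, IsCompact K → ∀ k : ℕ, ∀ q : ℝ, 0 ≤ q →
    ∃ C : ℝ, 0 < C ∧ ∃ ε₀ : ℝ, 0 < ε₀ ∧
      ∀ ε ∈ Set.Ioc (0:ℝ) 1, ε ≤ ε₀ → ∀ x ∈ K,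
        ‖iteratedFDeriv ℝ k (u ε) x‖ ≤ C * ε ^ q

namespace ColombeauAux

variable {n : ℕ}

/-- The rescaled, truncated mollifier. -/
def moll (n : ℕ) (φ : SchwartzMap (EuclideanSpace ℝ (Fin n)) ℝ)
    (χ : EuclideanSpace ℝ (Fin n) → ℝ) (ε : ℝ) (y : EuclideanSpace ℝ (Fin n)) : ℝ :=
  χ y * ((ε ^ n)⁻¹ * φ (ε⁻¹ • y))

variable {φ : SchwartzMap (EuclideanSpace ℝ (Fin n)) ℝ}
  {χ : EuclideanSpace ℝ (Fin n) → ℝ}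

lemma moll_smooth (hχ : ContDiff ℝ (⊤ : ℕ∞) χ) (ε : ℝ) :
    ContDiff ℝ (⊤ : ℕ∞) (moll n φ χ ε) := by
  refine hχ.mul (contDiff_const.mul ?_)
  exact (φ.smooth ⊤).comp (contDiff_id.const_smul ε⁻¹)

lemma moll_support_subset (ε : ℝ) :
    Function.support (moll n φ χ ε) ⊆ tsupport χ := by
  intro y hy
  have : χ y ≠ 0 := by
    intro h
    apply hy
    simp [moll, h]
  exact subset_tsupport χ this

lemma moll_compactSupport (hχ : HasCompactSupport χ) (ε : ℝ) :
    HasCompactSupport (moll n φ χ ε) := hχ.mul_right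

/-- Change of variables `y = ε • z` for integrals against the rescaled mollifier. -/
lemma integral_scaling {ε : ℝ} (hε : 0 < ε) (g : EuclideanSpace ℝ (Fin n) → ℝ)
    (h : EuclideanSpace ℝ (Fin n) → ℝ) :
    ∫ y : EuclideanSpace ℝ (Fin n), g y * ((ε ^ n)⁻¹ * h (ε⁻¹ • y))
      = ∫ z : EuclideanSpace ℝ (Fin n), g (ε • z) * h z := by
  have hn : Module.finrank ℝ (EuclideanSpace ℝ (Fin n)) = n := finrank_euclideanSpace_fin
  have key := MeasureTheory.Measure.integral_comp_smul (μ := volume)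
    (fun w : EuclideanSpace ℝ (Fin n) => g w * h (ε⁻¹ • w)) ε
  rw [hn] at key
  have h1 : ∀ z : EuclideanSpace ℝ (Fin n),
      g (ε • z) * h (ε⁻¹ • ε • z) = g (ε • z) * h z := by
    intro z
    rw [smul_smul, inv_mul_cancel₀ hε.ne', one_smul]
  calc ∫ y : EuclideanSpace ℝ (Fin n), g y * ((ε ^ n)⁻¹ * h (ε⁻¹ • y))
      = ∫ y : EuclideanSpace ℝ (Fin n), (ε ^ n)⁻¹ • (g y * h (ε⁻¹ • y)) := by
        refine integral_congr_ae (Eventually.of_forall fun y => ?_)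
        simp [smul_eq_mul]; ring
    _ = (ε ^ n)⁻¹ • ∫ y : EuclideanSpace ℝ (Fin n), g y * h (ε⁻¹ • y) := by
        rw [integral_smul]
    _ = ∫ z : EuclideanSpace ℝ (Fin n), g (ε • z) * h z := by
        simp only [h1] at key
        rw [key, abs_of_nonneg (by positivity)]

/-- Coordinates are bounded by the norm. -/
lemma abs_coord_le_norm (y : EuclideanSpace ℝ (Fin n)) (i : Fin n) : |y i| ≤ ‖y‖ := by
  have := EuclideanSpace.norm_eq y
  have h1 : |y i| = Real.sqrt (|y i| ^ 2) := by
    rw [Real.sqrt_sq_eq_abs, abs_abs]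
  rw [h1, this]
  apply Real.sqrt_le_sqrt
  have : |y i| ^ 2 = ‖y i‖ ^ 2 := by rw [Real.norm_eq_abs]
  rw [this]
  exact Finset.single_le_sum (f := fun j => ‖y j‖ ^ 2)
    (fun j _ => by positivity) (Finset.mem_univ i)

lemma abs_prod_pow_le (y : EuclideanSpace ℝ (Fin n)) (α : Fin n → ℕ) :
    |∏ i, y i ^ α i| ≤ ‖y‖ ^ (∑ i, α i) := by
  rw [Finset.abs_prod, ← Finset.prod_pow_eq_pow_sum]
  refine Finset.prod_le_prod (fun i _ => by positivity) (fun i _ => ?_)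
  rw [abs_pow]
  exact pow_le_pow_left₀ (abs_nonneg _) (abs_coord_le_norm y i) _

/-- The fundamental moment estimate: all moments of the truncated rescaled mollifier
are `O(ε^q)` for every `q`, except the zeroth one which is `1 + O(ε^q)`. -/
lemma moment_bound
    (hφ1 : ∫ x : EuclideanSpace ℝ (Fin n), φ x = 1)
    (hφmom : ∀ α : Fin n → ℕ, 1 ≤ ∑ i, α i →
      ∫ x : EuclideanSpace ℝ (Fin n), (∏ i, x i ^ α i) * φ x = 0)
    (hχc : Continuous χ) (hχsupp : HasCompactSupport χ)
    (hχone : ∀ᶠ y in 𝓝 (0 : EuclideanSpace ℝ (Fin n)), χ y = 1)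
    (α : Fin n → ℕ) {q : ℝ} (hq : 0 ≤ q) :
    ∃ C : ℝ, 0 < C ∧ ∀ ε ∈ Set.Ioc (0:ℝ) 1,
      |(∫ y : EuclideanSpace ℝ (Fin n), (∏ i, y i ^ α i) * moll n φ χ ε y)
        - (if (∑ i, α i) = 0 then 1 else 0)| ≤ C * ε ^ q := by
  classical
  obtain ⟨δ, hδpos, hδ⟩ : ∃ δ > 0, ∀ y : EuclideanSpace ℝ (Fin n), ‖y‖ < δ → χ y = 1 := by
    rcases Metric.eventually_nhds_iff.mp hχone with ⟨δ, hδpos, h⟩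
    exact ⟨δ, hδpos, fun y hy => h (by simpa [dist_zero_right] using hy)⟩
  obtain ⟨B, hB⟩ := hχsupp.exists_bound_of_continuous hχc
  have hB0 : 0 ≤ B := le_trans (norm_nonneg _) (hB 0)
  set N : ℕ := ⌈q⌉₊ with hN
  set a : ℕ := ∑ i, α i with ha
  set S : ℝ := ∫ z : EuclideanSpace ℝ (Fin n), ‖z‖ ^ (a + N) * |φ z| with hS
  have hSnonneg : 0 ≤ S := integral_nonneg fun z => by positivity
  have hcont_prod : Continuous fun z : EuclideanSpace ℝ (Fin n) => ∏ i, z i ^ α i :=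
    continuous_finset_prod _ fun i _ => ((EuclideanSpace.proj i).continuous).pow _
  have hint1 : Integrable (fun z : EuclideanSpace ℝ (Fin n) => (∏ i, z i ^ α i) * φ z) := by
    refine (φ.integrable_pow_mul volume a).mono'
      ((hcont_prod.mul φ.continuous).aestronglyMeasurable)
      (Eventually.of_forall fun z => ?_)
    rw [norm_mul]
    refine mul_le_mul_of_nonneg_right ?_ (norm_nonneg _)
    rw [Real.norm_eq_abs]
    exact abs_prod_pow_le z α
  have hIval : (∫ z : EuclideanSpace ℝ (Fin n), (∏ i, z i ^ α i) * φ z)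
      = if a = 0 then 1 else 0 := by
    by_cases h0 : a = 0
    · have hzero : ∀ i, α i = 0 := fun i =>
        (Finset.sum_eq_zero_iff.mp h0) i (Finset.mem_univ i)
      simp only [h0, if_pos]
      calc (∫ z : EuclideanSpace ℝ (Fin n), (∏ i, z i ^ α i) * φ z)
          = ∫ z : EuclideanSpace ℝ (Fin n), φ z := by
            refine integral_congr_ae (Eventually.of_forall fun z => ?_)
            simp [hzero]
        _ = 1 := hφ1
    · rw [if_neg h0]
      exact hφmom α (Nat.one_le_iff_ne_zero.mpr h0)
  refine ⟨(B + 1) * S / δ ^ N + 1, by positivity, fun ε hε => ?_⟩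
  obtain ⟨hε0, hε1⟩ := hε
  -- change of variables
  have hmain : (∫ y : EuclideanSpace ℝ (Fin n), (∏ i, y i ^ α i) * moll n φ χ ε y)
      = ε ^ a * ∫ z : EuclideanSpace ℝ (Fin n), (∏ i, z i ^ α i) * (χ (ε • z) * φ z) := by
    calc (∫ y : EuclideanSpace ℝ (Fin n), (∏ i, y i ^ α i) * moll n φ χ ε y)
        = ∫ y : EuclideanSpace ℝ (Fin n),
            ((∏ i, y i ^ α i) * χ y) * ((ε ^ n)⁻¹ * φ (ε⁻¹ • y)) := by
          refine integral_congr_ae (Eventually.of_forall fun y => ?_)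
          simp [moll]; ring
      _ = ∫ z : EuclideanSpace ℝ (Fin n), ((∏ i, (ε • z) i ^ α i) * χ (ε • z)) * φ z :=
          integral_scaling hε0 _ _
      _ = ∫ z : EuclideanSpace ℝ (Fin n), ε ^ a * ((∏ i, z i ^ α i) * (χ (ε • z) * φ z)) := by
          refine integral_congr_ae (Eventually.of_forall fun z => ?_)
          have hco : ∀ i, (ε • z) i = ε * z i := fun i => rfl
          simp only [hco, mul_pow, Finset.prod_mul_distrib, Finset.prod_pow_eq_pow_sum, ← ha]
          ring
      _ = ε ^ a * ∫ z : EuclideanSpace ℝ (Fin n), (∏ i, z i ^ α i) * (χ (ε • z) * φ z) :=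
          integral_const_mul _ _
  have hint2 : Integrable (fun z : EuclideanSpace ℝ (Fin n) =>
      (∏ i, z i ^ α i) * (χ (ε • z) * φ z)) := by
    refine ((φ.integrable_pow_mul volume a).const_mul B).mono'
      ((hcont_prod.mul ((hχc.comp (continuous_id.const_smul ε)).mul
        φ.continuous)).aestronglyMeasurable) (Eventually.of_forall fun z => ?_)
    have h1 : ‖(∏ i, z i ^ α i) * (χ (ε • z) * φ z)‖
        = |∏ i, z i ^ α i| * (|χ (ε • z)| * |φ z|) := by
      rw [Real.norm_eq_abs, abs_mul, abs_mul]
    rw [h1]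
    have hBabs : |χ (ε • z)| ≤ B := by
      have := hB (ε • z); rwa [Real.norm_eq_abs] at this
    calc |∏ i, z i ^ α i| * (|χ (ε • z)| * |φ z|)
        ≤ ‖z‖ ^ a * (B * |φ z|) := by
          refine mul_le_mul (abs_prod_pow_le z α)
            (mul_le_mul_of_nonneg_right hBabs (abs_nonneg _)) (by positivity) (by positivity)
      _ = B * (‖z‖ ^ a * ‖φ z‖) := by rw [Real.norm_eq_abs]; ring
  have hint3 : Integrable (fun z : EuclideanSpace ℝ (Fin n) =>
      (∏ i, z i ^ α i) * ((χ (ε • z) - 1) * φ z)) := by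
    have heq : (fun z : EuclideanSpace ℝ (Fin n) =>
        (∏ i, z i ^ α i) * ((χ (ε • z) - 1) * φ z))
        = (fun z : EuclideanSpace ℝ (Fin n) => (∏ i, z i ^ α i) * (χ (ε • z) * φ z))
          - (fun z : EuclideanSpace ℝ (Fin n) => (∏ i, z i ^ α i) * φ z) := by
      funext z; simp [Pi.sub_apply]; ring
    rw [heq]
    exact hint2.sub hint1
  have hsplit : (∫ z : EuclideanSpace ℝ (Fin n), (∏ i, z i ^ α i) * (χ (ε • z) * φ z))
      = (∫ z : EuclideanSpace ℝ (Fin n), (∏ i, z i ^ α i) * φ z)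
        + ∫ z : EuclideanSpace ℝ (Fin n), (∏ i, z i ^ α i) * ((χ (ε • z) - 1) * φ z) := by
    rw [← integral_add hint1 hint3]
    refine integral_congr_ae (Eventually.of_forall fun z => ?_)
    ring
  have hErr : |∫ z : EuclideanSpace ℝ (Fin n), (∏ i, z i ^ α i) * ((χ (ε • z) - 1) * φ z)|
      ≤ (B + 1) / δ ^ N * ε ^ N * S := by
    have hintb : Integrable (fun z : EuclideanSpace ℝ (Fin n) =>
        ((B + 1) / δ ^ N * ε ^ N) * (‖z‖ ^ (a + N) * |φ z|)) := by
      have h := (φ.integrable_pow_mul volume (a + N)).const_mul ((B + 1) / δ ^ N * ε ^ N)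
      simpa [Real.norm_eq_abs] using h
    have hptwise : ∀ z : EuclideanSpace ℝ (Fin n),
        ‖(∏ i, z i ^ α i) * ((χ (ε • z) - 1) * φ z)‖
          ≤ ((B + 1) / δ ^ N * ε ^ N) * (‖z‖ ^ (a + N) * |φ z|) := by
      intro z
      by_cases hz : ‖ε • z‖ < δ
      · rw [hδ _ hz]
        simp only [sub_self, zero_mul, mul_zero, norm_zero]
        positivity
      · push_neg at hz
        have hnz : ‖ε • z‖ = ε * ‖z‖ := by
          rw [norm_smul, Real.norm_eq_abs, abs_of_pos hε0]
        rw [hnz] at hz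
        have h2 : 1 ≤ (ε * ‖z‖ / δ) ^ N := one_le_pow₀ ((one_le_div hδpos).mpr hz)
        have h3 : ‖(∏ i, z i ^ α i) * ((χ (ε • z) - 1) * φ z)‖
            = |∏ i, z i ^ α i| * (|χ (ε • z) - 1| * |φ z|) := by
          rw [Real.norm_eq_abs, abs_mul, abs_mul]
        rw [h3]
        have h4 : |χ (ε • z) - 1| ≤ B + 1 := by
          calc |χ (ε • z) - 1| ≤ |χ (ε • z)| + 1 := by
                have := abs_sub (χ (ε • z)) 1
                calc |χ (ε • z) - 1| ≤ |χ (ε • z)| + |(1:ℝ)| := abs_sub _ _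
                  _ = |χ (ε • z)| + 1 := by rw [abs_one]
            _ ≤ B + 1 := by
                have := hB (ε • z); rw [Real.norm_eq_abs] at this; linarith
        calc |∏ i, z i ^ α i| * (|χ (ε • z) - 1| * |φ z|)
            ≤ ‖z‖ ^ a * ((B + 1) * |φ z|) := by
              refine mul_le_mul (abs_prod_pow_le z α)
                (mul_le_mul_of_nonneg_right h4 (abs_nonneg _)) (by positivity) (by positivity)
          _ ≤ ‖z‖ ^ a * ((B + 1) * |φ z|) * (ε * ‖z‖ / δ) ^ N :=
              le_mul_of_one_le_right (by positivity) h2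
          _ = ((B + 1) / δ ^ N * ε ^ N) * (‖z‖ ^ (a + N) * |φ z|) := by
              have hδN : (δ:ℝ) ^ N ≠ 0 := by positivity
              rw [div_pow, mul_pow, pow_add]
              field_simp
    calc |∫ z : EuclideanSpace ℝ (Fin n), (∏ i, z i ^ α i) * ((χ (ε • z) - 1) * φ z)|
        ≤ ∫ z : EuclideanSpace ℝ (Fin n),
            ((B + 1) / δ ^ N * ε ^ N) * (‖z‖ ^ (a + N) * |φ z|) :=
          norm_integral_le_of_norm_le hintb (Eventually.of_forall hptwise)
      _ = (B + 1) / δ ^ N * ε ^ N * S := integral_const_mul _ _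
  -- put everything together
  rw [hmain, hsplit, hIval]
  have hεq : (ε : ℝ) ^ N ≤ ε ^ q := by
    have h1 : (ε : ℝ) ^ N = ε ^ (N : ℝ) := (Real.rpow_natCast ε N).symm
    rw [h1]
    exact Real.rpow_le_rpow_of_exponent_ge hε0 hε1 (Nat.le_ceil q)
  have hq0 : (0:ℝ) ≤ ε ^ q := Real.rpow_nonneg hε0.le q
  have hfinal : |∫ z : EuclideanSpace ℝ (Fin n), (∏ i, z i ^ α i) * ((χ (ε • z) - 1) * φ z)|
      ≤ ((B + 1) * S / δ ^ N) * ε ^ q := by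
    refine hErr.trans ?_
    calc (B + 1) / δ ^ N * ε ^ N * S = ((B + 1) * S / δ ^ N) * ε ^ N := by ring
      _ ≤ ((B + 1) * S / δ ^ N) * ε ^ q := by
          refine mul_le_mul_of_nonneg_left hεq (by positivity)
  by_cases h0 : a = 0
  · simp only [h0, if_pos, pow_zero, one_mul]
    have : |1 + (∫ z : EuclideanSpace ℝ (Fin n),
        (∏ i, z i ^ α i) * ((χ (ε • z) - 1) * φ z)) - 1|
        = |∫ z : EuclideanSpace ℝ (Fin n), (∏ i, z i ^ α i) * ((χ (ε • z) - 1) * φ z)| := by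
      congr 1; ring
    rw [this]
    refine hfinal.trans ?_
    rw [add_mul, one_mul]
    linarith [hq0]
  · rw [if_neg h0]
    have hεa : (ε:ℝ) ^ a ≤ 1 := pow_le_one₀ hε0.le hε1
    have hεa0 : (0:ℝ) ≤ ε ^ a := by positivity
    rw [sub_zero, zero_add, abs_mul, abs_of_nonneg hεa0]
    calc ε ^ a * |∫ z : EuclideanSpace ℝ (Fin n),
          (∏ i, z i ^ α i) * ((χ (ε • z) - 1) * φ z)|
        ≤ 1 * |∫ z : EuclideanSpace ℝ (Fin n),
          (∏ i, z i ^ α i) * ((χ (ε • z) - 1) * φ z)| := by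
          exact mul_le_mul_of_nonneg_right hεa (abs_nonneg _)
      _ = |∫ z : EuclideanSpace ℝ (Fin n),
          (∏ i, z i ^ α i) * ((χ (ε • z) - 1) * φ z)| := one_mul _
      _ ≤ ((B + 1) * S / δ ^ N) * ε ^ q := hfinal
      _ ≤ ((B + 1) * S / δ ^ N + 1) * ε ^ q := by
          rw [add_mul, one_mul]
          linarith [hq0]

/-- Derivative of a smooth function along a line, in terms of iterated Fréchet derivatives. -/
lemma iteratedDeriv_line {F : Type} [NormedAddCommGroup F] [NormedSpace ℝ F] (j : ℕ) :
    ∀ (g : EuclideanSpace ℝ (Fin n) → F), ContDiff ℝ (⊤ : ℕ∞) g →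
      ∀ (x v : EuclideanSpace ℝ (Fin n)) (t : ℝ),
      iteratedDeriv j (fun s : ℝ => g (x + s • v)) t
        = iteratedFDeriv ℝ j g (x + t • v) (fun _ => v) := by
  induction j with
  | zero =>
    intro g hg x v t
    simp [iteratedDeriv_zero, iteratedFDeriv_zero_apply]
  | succ j ih =>
    intro g hg x v t
    have hderiv : (deriv fun s : ℝ => g (x + s • v))
        = fun s : ℝ => (fun z => fderiv ℝ g z v) (x + s • v) := by
      funext s
      have hline : HasDerivAt (fun s : ℝ => x + s • v) v s := by
        simpa using ((hasDerivAt_id s).smul_const v).const_add x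
      have : HasDerivAt (fun s : ℝ => g (x + s • v)) (fderiv ℝ g (x + s • v) v) s :=
        (hg.differentiable (by simp) (x + s • v)).hasFDerivAt.comp_hasDerivAt s hline
      exact this.deriv
    have hg' : ContDiff ℝ (⊤ : ℕ∞) (fun z => fderiv ℝ g z v) :=
      (hg.fderiv_right (by exact_mod_cast le_top)).clm_apply contDiff_const
    rw [iteratedDeriv_succ', hderiv, ih _ hg' x v t]
    -- now rewrite the RHS
    have hA : ∀ z : EuclideanSpace ℝ (Fin n),
        iteratedFDeriv ℝ j (fun z => fderiv ℝ g z v) z (fun _ => v)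
          = iteratedFDeriv ℝ j (fderiv ℝ g) z (fun _ => v) v := by
      intro z
      have hcomp : (fun z : EuclideanSpace ℝ (Fin n) => fderiv ℝ g z v)
          = (ContinuousLinearMap.apply ℝ F v) ∘ (fderiv ℝ g) := rfl
      have hgfd : ContDiff ℝ (⊤ : ℕ∞) (fderiv ℝ g) :=
        hg.fderiv_right (by exact_mod_cast le_top)
      rw [hcomp, ContinuousLinearMap.iteratedFDeriv_comp_left _
        (hgfd.contDiffAt (x := z)) (by exact_mod_cast le_top)]
      rfl
    rw [hA]
    have := iteratedFDeriv_succ_apply_right (𝕜 := ℝ) (n := j) (f := g)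
      (x := x + t • v) (fun _ => v)
    rw [this]
    congr 1

lemma iteratedDerivWithin_eq_iteratedDeriv_of_contDiff {F : Type} [NormedAddCommGroup F]
    [NormedSpace ℝ F] {G : ℝ → F} (hG : ContDiff ℝ (⊤ : ℕ∞) G) {s : Set ℝ}
    (hs : UniqueDiffOn ℝ s) {t : ℝ} (ht : t ∈ s) (m : ℕ) :
    iteratedDerivWithin m G s t = iteratedDeriv m G t := by
  have h := (contDiff_iff_ftaylorSeries.mp hG).hasFTaylorSeriesUpToOn s
  have h2 := h.eq_iteratedFDerivWithin_of_uniqueDiffOn (m := m) (by exact_mod_cast le_top) hs ht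
  rw [iteratedDerivWithin, iteratedDeriv, ← h2]
  rfl

/-- Quantitative multivariate Taylor estimate. -/
lemma taylor_bound {F : Type} [NormedAddCommGroup F] [NormedSpace ℝ F]
    {g : EuclideanSpace ℝ (Fin n) → F} (hg : ContDiff ℝ (⊤ : ℕ∞) g)
    (x y : EuclideanSpace ℝ (Fin n)) (m : ℕ) {M : ℝ}
    (hM : ∀ t ∈ Set.Icc (0:ℝ) 1, ‖iteratedFDeriv ℝ (m+1) g (x - t • y)‖ ≤ M) :
    ‖g (x - y) - ∑ j ∈ Finset.range (m+1),
        ((j.factorial : ℝ)⁻¹ • iteratedFDeriv ℝ j g x (fun _ => -y))‖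
      ≤ M * ‖y‖ ^ (m+1) / m.factorial := by
  set G : ℝ → F := fun s => g (x + s • (-y)) with hGdef
  have hGsm : ContDiff ℝ (⊤ : ℕ∞) G :=
    hg.comp (contDiff_const.add (contDiff_id.smul contDiff_const))
  have hiter : ∀ (j : ℕ) (t : ℝ),
      iteratedDeriv j G t = iteratedFDeriv ℝ j g (x + t • (-y)) (fun _ => -y) :=
    fun j t => iteratedDeriv_line j g hg x (-y) t
  have huniq : UniqueDiffOn ℝ (Set.Icc (0:ℝ) 1) := uniqueDiffOn_Icc one_pos
  have hxy : ∀ t : ℝ, x + t • (-y) = x - t • y := by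
    intro t; rw [smul_neg, ← sub_eq_add_neg]
  have hC : ∀ t ∈ Set.Icc (0:ℝ) 1,
      ‖iteratedDerivWithin (m+1) G (Set.Icc 0 1) t‖ ≤ M * ‖y‖ ^ (m+1) := by
    intro t ht
    rw [iteratedDerivWithin_eq_iteratedDeriv_of_contDiff hGsm huniq ht, hiter, hxy]
    calc ‖iteratedFDeriv ℝ (m+1) g (x - t • y) (fun _ => -y)‖
        ≤ ‖iteratedFDeriv ℝ (m+1) g (x - t • y)‖ * ∏ _i : Fin (m+1), ‖-y‖ :=
          ContinuousMultilinearMap.le_opNorm _ _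
      _ = ‖iteratedFDeriv ℝ (m+1) g (x - t • y)‖ * ‖y‖ ^ (m+1) := by
          rw [Finset.prod_const, norm_neg]
          simp
      _ ≤ M * ‖y‖ ^ (m+1) := mul_le_mul_of_nonneg_right (hM t ht) (by positivity)
  have hbound := taylor_mean_remainder_bound (f := G) (a := 0) (b := 1) (n := m)
    zero_le_one ((hGsm.of_le (by exact_mod_cast le_top)).contDiffOn)
    (Set.right_mem_Icc.mpr zero_le_one) hC
  have hG1 : G 1 = g (x - y) := by
    have := hxy 1
    rw [one_smul] at this
    simp only [hGdef, one_smul, this]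
  have htay : taylorWithinEval G m (Set.Icc 0 1) 0 1
      = ∑ j ∈ Finset.range (m+1),
          ((j.factorial : ℝ)⁻¹ • iteratedFDeriv ℝ j g x (fun _ => -y)) := by
    rw [taylor_within_apply]
    refine Finset.sum_congr rfl fun j hj => ?_
    rw [iteratedDerivWithin_eq_iteratedDeriv_of_contDiff hGsm huniq
      (Set.left_mem_Icc.mpr zero_le_one), hiter]
    have h0 : x + (0:ℝ) • (-y) = x := by simp
    rw [h0]
    norm_num
  rw [hG1, htay] at hbound
  calc ‖g (x - y) - ∑ j ∈ Finset.range (m+1),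
        ((j.factorial : ℝ)⁻¹ • iteratedFDeriv ℝ j g x (fun _ => -y))‖
      ≤ M * ‖y‖ ^ (m+1) * (1 - 0) ^ (m+1) / m.factorial := hbound
    _ = M * ‖y‖ ^ (m+1) / m.factorial := by norm_num

set_option maxHeartbeats 1000000 in
set_option synthInstance.maxHeartbeats 200000 in
/-- Differentiation under the integral sign for the mollified net. -/
lemma hasFDerivAt_mollified {F : Type} [NormedAddCommGroup F] [NormedSpace ℝ F]
    [CompleteSpace F]
    (hχsmooth : ContDiff ℝ (⊤ : ℕ∞) χ) (hχsupp : HasCompactSupport χ)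
    {ε : ℝ} (hε : ε ∈ Set.Ioc (0:ℝ) 1)
    {g : EuclideanSpace ℝ (Fin n) → F} (hg : ContDiff ℝ (⊤ : ℕ∞) g)
    (x₀ : EuclideanSpace ℝ (Fin n)) :
    HasFDerivAt (fun x => ∫ y : EuclideanSpace ℝ (Fin n), moll n φ χ ε y • g (x - y))
      (∫ y : EuclideanSpace ℝ (Fin n), moll n φ χ ε y • fderiv ℝ g (x₀ - y)) x₀ := by
  have hmc : Continuous (moll n φ χ ε) := (moll_smooth hχsmooth ε).continuous
  have hmsupp : HasCompactSupport (moll n φ χ ε) := moll_compactSupport hχsupp ε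
  have hgc : Continuous g := hg.continuous
  have hg' : Continuous (fderiv ℝ g) := hg.continuous_fderiv (by simp)
  set D : Set (EuclideanSpace ℝ (Fin n)) :=
    (fun p : EuclideanSpace ℝ (Fin n) × EuclideanSpace ℝ (Fin n) => p.1 - p.2) ''
      ((Metric.closedBall x₀ 1) ×ˢ tsupport χ) with hDdef
  have hD : IsCompact D :=
    ((isCompact_closedBall x₀ 1).prod hχsupp).image (continuous_fst.sub continuous_snd)
  obtain ⟨M, hM⟩ := hD.exists_bound_of_continuousOn hg'.continuousOn
  refine hasFDerivAt_integral_of_dominated_of_fderiv_le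
    (F' := fun x y => moll n φ χ ε y • fderiv ℝ g (x - y))
    (bound := fun y => ‖moll n φ χ ε y‖ * M) (Metric.ball_mem_nhds x₀ one_pos) ?_ ?_ ?_ ?_ ?_ ?_
  · exact Eventually.of_forall fun x =>
      (hmc.smul (hgc.comp (continuous_const.sub continuous_id))).aestronglyMeasurable
  · exact (hmc.smul (hgc.comp (continuous_const.sub continuous_id))).integrable_of_hasCompactSupport
      hmsupp.smul_right
  · exact (hmc.smul (hg'.comp (continuous_const.sub continuous_id))).aestronglyMeasurable
  · refine Eventually.of_forall fun y => fun x hx => ?_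
    show ‖moll n φ χ ε y • fderiv ℝ g (x - y)‖ ≤ ‖moll n φ χ ε y‖ * M
    by_cases hy : y ∈ tsupport χ
    · refine (norm_smul_le (moll n φ χ ε y) (fderiv ℝ g (x - y))).trans ?_
      refine mul_le_mul_of_nonneg_left (hM _ ?_) (norm_nonneg _)
      exact ⟨(x, y), ⟨Metric.ball_subset_closedBall hx, hy⟩, rfl⟩
    · have hz : moll n φ χ ε y = 0 :=
        Function.notMem_support.mp (fun h => hy (moll_support_subset ε h))
      simp [hz]
  · exact ((hmc.norm.mul continuous_const).integrable_of_hasCompactSupport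
      hmsupp.norm.mul_right)
  · refine Eventually.of_forall fun y => fun x hx => ?_
    have h2 := (hg.differentiable (by simp) (x - y)).hasFDerivAt
    have h3 : HasFDerivAt (fun x : EuclideanSpace ℝ (Fin n) => x - y)
        (ContinuousLinearMap.id ℝ (EuclideanSpace ℝ (Fin n))) x := (hasFDerivAt_id x).sub_const y
    have h4 : HasFDerivAt (fun x => g (x - y)) (fderiv ℝ g (x - y)) x := by
      simpa [Function.comp_def] using h2.comp x h3
    exact h4.const_smul (moll n φ χ ε y)

/-- The core zeroth-order estimate. -/
lemma est_zero {F : Type} [NormedAddCommGroup F] [NormedSpace ℝ F] [CompleteSpace F]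
    (hφ1 : ∫ x : EuclideanSpace ℝ (Fin n), φ x = 1)
    (hφmom : ∀ α : Fin n → ℕ, 1 ≤ ∑ i, α i →
      ∫ x : EuclideanSpace ℝ (Fin n), (∏ i, x i ^ α i) * φ x = 0)
    (hχsmooth : ContDiff ℝ (⊤ : ℕ∞) χ) (hχsupp : HasCompactSupport χ)
    (hχone : ∀ᶠ y in 𝓝 (0 : EuclideanSpace ℝ (Fin n)), χ y = 1)
    {g : EuclideanSpace ℝ (Fin n) → F} (hg : ContDiff ℝ (⊤ : ℕ∞) g)
    {K : Set (EuclideanSpace ℝ (Fin n))} (hK : IsCompact K) {q : ℝ} (hq : 0 ≤ q) :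
    ∃ C : ℝ, 0 < C ∧ ∀ ε ∈ Set.Ioc (0:ℝ) 1, ∀ x ∈ K,
      ‖(∫ y : EuclideanSpace ℝ (Fin n), moll n φ χ ε y • g (x - y)) - g x‖ ≤ C * ε ^ q := by
  classical
  obtain ⟨B, hB⟩ := hχsupp.exists_bound_of_continuous hχsmooth.continuous
  have hB0 : 0 ≤ B := le_trans (norm_nonneg _) (hB 0)
  set m : ℕ := ⌈q⌉₊ with hm
  -- the compact set where the Taylor remainder derivative is evaluated
  set T : Set (EuclideanSpace ℝ (Fin n)) :=
    (fun p : (EuclideanSpace ℝ (Fin n) × EuclideanSpace ℝ (Fin n)) × ℝ =>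
      p.1.1 - p.2 • p.1.2) '' ((K ×ˢ tsupport χ) ×ˢ Set.Icc (0:ℝ) 1) with hT
  have hTc : IsCompact T := ((hK.prod hχsupp).prod isCompact_Icc).image
    ((continuous_fst.comp continuous_fst).sub
      (continuous_snd.smul (continuous_snd.comp continuous_fst)))
  obtain ⟨M0, hM0⟩ := hTc.exists_bound_of_continuousOn
    (hg.continuous_iteratedFDeriv (m := m + 1) (by exact_mod_cast le_top)).continuousOn
  set M : ℝ := max M0 0 with hMdef
  have hM : ∀ z ∈ T, ‖iteratedFDeriv ℝ (m+1) g z‖ ≤ M :=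
    fun z hz => (hM0 z hz).trans (le_max_left _ _)
  have hMnn : 0 ≤ M := le_max_right _ _
  -- bounds for lower-order derivatives on K
  have hMgex : ∀ j : ℕ, ∃ Mj : ℝ, 0 ≤ Mj ∧ ∀ x ∈ K, ‖iteratedFDeriv ℝ j g x‖ ≤ Mj := by
    intro j
    obtain ⟨Mj, hMj⟩ := hK.exists_bound_of_continuousOn
      (hg.continuous_iteratedFDeriv (m := j) (by exact_mod_cast le_top)).continuousOn
    exact ⟨max Mj 0, le_max_right _ _, fun x hx => (hMj x hx).trans (le_max_left _ _)⟩
  choose Mg hMg0 hMgle using hMgex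
  -- moment constants
  have hmomall : ∀ α : Fin n → ℕ, ∃ C : ℝ, 0 < C ∧ ∀ ε ∈ Set.Ioc (0:ℝ) 1,
      |(∫ y : EuclideanSpace ℝ (Fin n), (∏ i, y i ^ α i) * moll n φ χ ε y)
        - (if (∑ i, α i) = 0 then 1 else 0)| ≤ C * ε ^ q :=
    fun α => moment_bound hφ1 hφmom hχsmooth.continuous hχsupp hχone α hq
  choose Cm hCm0 hCmle using hmomall
  set S : ℝ := ∫ z : EuclideanSpace ℝ (Fin n), ‖z‖ ^ (m+1) * |φ z| with hS
  have hS0 : 0 ≤ S := integral_nonneg fun z => by positivity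
  -- the count of a fiber
  set cnt : ∀ j : ℕ, (Fin j → Fin n) → Fin n → ℕ :=
    fun j v i => (Finset.univ.filter fun k => v k = i).card with hcnt
  have hcntsum : ∀ (j : ℕ) (v : Fin j → Fin n), (∑ i, cnt j v i) = j := by
    intro j v
    have h := Finset.card_eq_sum_card_fiberwise
      (f := v) (s := Finset.univ) (t := Finset.univ) (fun k _ => Finset.mem_univ (v k))
    rw [hcnt, ← h, Finset.card_univ, Fintype.card_fin]
  set Cfin : ℝ := (B * M / m.factorial * S + 1)
      + ∑ j ∈ Finset.range (m+1), (j.factorial : ℝ)⁻¹ *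
          ∑ _v : Fin j → Fin n, Cm (cnt j _v) * Mg j with hCfin
  have hsum0 : 0 ≤ ∑ j ∈ Finset.range (m+1), (j.factorial : ℝ)⁻¹ *
      ∑ _v : Fin j → Fin n, Cm (cnt j _v) * Mg j :=
    Finset.sum_nonneg fun j _ => mul_nonneg (by positivity)
      (Finset.sum_nonneg fun v _ => mul_nonneg (hCm0 _).le (hMg0 _))
  have hCfin0 : 0 < Cfin := by
    have h1 : (0:ℝ) ≤ B * M / m.factorial * S := by positivity
    rw [hCfin]; linarith
  refine ⟨Cfin, hCfin0, fun ε hε x hx => ?_⟩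
  have hε0 := hε.1
  have hεq : (0:ℝ) ≤ ε ^ q := Real.rpow_nonneg hε0.le q
  have hεm : (ε:ℝ) ^ (m+1) ≤ ε ^ q := by
    have h1 : (ε:ℝ) ^ (m+1) = ε ^ ((m+1 : ℕ) : ℝ) := (Real.rpow_natCast ε (m+1)).symm
    rw [h1]
    refine Real.rpow_le_rpow_of_exponent_ge hε0 hε.2 ?_
    exact (Nat.le_ceil q).trans (by exact_mod_cast Nat.le_succ m)
  have hmc : Continuous (moll n φ χ ε) := (moll_smooth hχsmooth ε).continuous
  have hmsupp : HasCompactSupport (moll n φ χ ε) := moll_compactSupport hχsupp ε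
  -- the Taylor polynomial in the y-variable
  set P : EuclideanSpace ℝ (Fin n) → F := fun y => ∑ j ∈ Finset.range (m+1),
      (j.factorial : ℝ)⁻¹ • iteratedFDeriv ℝ j g x (fun _ => -y) with hP
  have hPcont : Continuous P := by
    refine continuous_finset_sum _ fun j _ => Continuous.const_smul ?_ _
    exact (iteratedFDeriv ℝ j g x).cont.comp (continuous_pi fun _ => continuous_neg)
  have hint_g : Integrable (fun y => moll n φ χ ε y • g (x - y)) :=
    Continuous.integrable_of_hasCompactSupport
      (hmc.smul (hg.continuous.comp (continuous_const.sub continuous_id))) hmsupp.smul_right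
  have hint_P : Integrable (fun y => moll n φ χ ε y • P y) :=
    Continuous.integrable_of_hasCompactSupport (hmc.smul hPcont) hmsupp.smul_right
  have hint_R : Integrable (fun y => moll n φ χ ε y • (g (x - y) - P y)) := by
    have heq : (fun y => moll n φ χ ε y • (g (x - y) - P y))
        = (fun y => moll n φ χ ε y • g (x - y)) - (fun y => moll n φ χ ε y • P y) := by
      funext y; simp [smul_sub]
    rw [heq]; exact hint_g.sub hint_P
  have hsplit : (∫ y : EuclideanSpace ℝ (Fin n), moll n φ χ ε y • g (x - y))
      = (∫ y : EuclideanSpace ℝ (Fin n), moll n φ χ ε y • (g (x - y) - P y))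
        + ∫ y : EuclideanSpace ℝ (Fin n), moll n φ χ ε y • P y := by
    rw [← integral_add hint_R hint_P]
    refine integral_congr_ae (Eventually.of_forall fun y => ?_)
    simp [smul_sub]
  -- Remainder estimate
  have hRb : ‖∫ y : EuclideanSpace ℝ (Fin n), moll n φ χ ε y • (g (x - y) - P y)‖
      ≤ (B * M / m.factorial * S) * ε ^ q := by
    have hW : Integrable (fun y : EuclideanSpace ℝ (Fin n) =>
        ‖moll n φ χ ε y‖ * (M * ‖y‖ ^ (m+1) / m.factorial)) :=
      Continuous.integrable_of_hasCompactSupport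
        (hmc.norm.mul ((continuous_const.mul (continuous_norm.pow _)).div_const _))
        hmsupp.norm.mul_right
    have hptw : ∀ y : EuclideanSpace ℝ (Fin n),
        ‖moll n φ χ ε y • (g (x - y) - P y)‖
          ≤ ‖moll n φ χ ε y‖ * (M * ‖y‖ ^ (m+1) / m.factorial) := by
      intro y
      by_cases hy : y ∈ tsupport χ
      · rw [norm_smul]
        refine mul_le_mul_of_nonneg_left ?_ (norm_nonneg _)
        have hMt : ∀ t ∈ Set.Icc (0:ℝ) 1,
            ‖iteratedFDeriv ℝ (m+1) g (x - t • y)‖ ≤ M := by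
          intro t ht
          exact hM _ ⟨((x, y), t), ⟨⟨hx, hy⟩, ht⟩, rfl⟩
        have := taylor_bound hg x y m hMt
        rw [hP]
        calc ‖g (x - y) - ∑ j ∈ Finset.range (m+1),
              (j.factorial : ℝ)⁻¹ • iteratedFDeriv ℝ j g x (fun _ => -y)‖
            ≤ M * ‖y‖ ^ (m+1) / m.factorial := this
          _ = M * ‖y‖ ^ (m+1) / m.factorial := rfl
      · have hz : moll n φ χ ε y = 0 :=
          Function.notMem_support.mp (fun h => hy (moll_support_subset ε h))
        simp [hz]
    refine (norm_integral_le_of_norm_le hW (Eventually.of_forall hptw)).trans ?_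
    -- compute/bound the integral of the dominating function
    have habs : ∀ y : EuclideanSpace ℝ (Fin n),
        ‖moll n φ χ ε y‖ * (M * ‖y‖ ^ (m+1) / m.factorial)
          = ((M / m.factorial) * ‖y‖ ^ (m+1) * |χ y|) * ((ε ^ n)⁻¹ * |φ (ε⁻¹ • y)|) := by
      intro y
      rw [Real.norm_eq_abs, moll, abs_mul, abs_mul, abs_of_nonneg (a := (ε ^ n)⁻¹)
        (by positivity)]
      ring
    have hscale : (∫ y : EuclideanSpace ℝ (Fin n),
        ((M / m.factorial) * ‖y‖ ^ (m+1) * |χ y|) * ((ε ^ n)⁻¹ * |φ (ε⁻¹ • y)|))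
        = ∫ z : EuclideanSpace ℝ (Fin n),
            ((M / m.factorial) * ‖ε • z‖ ^ (m+1) * |χ (ε • z)|) * |φ z| :=
      integral_scaling hε0 (fun y => (M / m.factorial) * ‖y‖ ^ (m+1) * |χ y|)
        (fun z => |φ z|)
    have hbd2 : (∫ z : EuclideanSpace ℝ (Fin n),
        ((M / m.factorial) * ‖ε • z‖ ^ (m+1) * |χ (ε • z)|) * |φ z|)
        ≤ (M / m.factorial) * ε ^ (m+1) * B * S := by
      have hrhsint : Integrable (fun z : EuclideanSpace ℝ (Fin n) =>
          ((M / m.factorial) * ε ^ (m+1) * B) * (‖z‖ ^ (m+1) * |φ z|)) := by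
        have h := (φ.integrable_pow_mul volume (m+1)).const_mul
          ((M / m.factorial) * ε ^ (m+1) * B)
        simpa [Real.norm_eq_abs] using h
      have hle : ∀ z : EuclideanSpace ℝ (Fin n),
          ((M / m.factorial) * ‖ε • z‖ ^ (m+1) * |χ (ε • z)|) * |φ z|
            ≤ ((M / m.factorial) * ε ^ (m+1) * B) * (‖z‖ ^ (m+1) * |φ z|) := by
        intro z
        have h1 : ‖ε • z‖ = ε * ‖z‖ := by
          rw [norm_smul, Real.norm_eq_abs, abs_of_pos hε0]
        have h2 : |χ (ε • z)| ≤ B := by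
          have := hB (ε • z); rwa [Real.norm_eq_abs] at this
        rw [h1, mul_pow]
        calc M / m.factorial * (ε ^ (m+1) * ‖z‖ ^ (m+1)) * |χ (ε • z)| * |φ z|
            ≤ M / m.factorial * (ε ^ (m+1) * ‖z‖ ^ (m+1)) * B * |φ z| := by
              refine mul_le_mul_of_nonneg_right
                (mul_le_mul_of_nonneg_left h2 (by positivity)) (abs_nonneg _)
          _ = ((M / m.factorial) * ε ^ (m+1) * B) * (‖z‖ ^ (m+1) * |φ z|) := by ring
      calc (∫ z : EuclideanSpace ℝ (Fin n),
          ((M / m.factorial) * ‖ε • z‖ ^ (m+1) * |χ (ε • z)|) * |φ z|)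
          ≤ ∫ z : EuclideanSpace ℝ (Fin n),
              ((M / m.factorial) * ε ^ (m+1) * B) * (‖z‖ ^ (m+1) * |φ z|) := by
            refine integral_mono_of_nonneg (Eventually.of_forall fun z => by positivity)
              hrhsint (Eventually.of_forall hle)
        _ = ((M / m.factorial) * ε ^ (m+1) * B) * S := integral_const_mul _ _
    calc (∫ y : EuclideanSpace ℝ (Fin n),
          ‖moll n φ χ ε y‖ * (M * ‖y‖ ^ (m+1) / m.factorial))
        = ∫ y : EuclideanSpace ℝ (Fin n),
            ((M / m.factorial) * ‖y‖ ^ (m+1) * |χ y|) * ((ε ^ n)⁻¹ * |φ (ε⁻¹ • y)|) := by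
          exact integral_congr_ae (Eventually.of_forall fun y => habs y)
      _ = ∫ z : EuclideanSpace ℝ (Fin n),
            ((M / m.factorial) * ‖ε • z‖ ^ (m+1) * |χ (ε • z)|) * |φ z| := hscale
      _ ≤ (M / m.factorial) * ε ^ (m+1) * B * S := hbd2
      _ = (B * M / m.factorial * S) * ε ^ (m+1) := by ring
      _ ≤ (B * M / m.factorial * S) * ε ^ q := by
          refine mul_le_mul_of_nonneg_left hεm (by positivity)
  -- expansion of the polynomial part
  have hDj : ∀ j : ℕ, (∫ y : EuclideanSpace ℝ (Fin n),
      moll n φ χ ε y • iteratedFDeriv ℝ j g x (fun _ => -y))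
      = ∑ v : Fin j → Fin n,
          (∫ y : EuclideanSpace ℝ (Fin n), (∏ i, y i ^ (cnt j v i)) * moll n φ χ ε y) •
            ((-1:ℝ)^j • iteratedFDeriv ℝ j g x
              (fun k => EuclideanSpace.single (v k) (1:ℝ))) := by
    intro j
    have hbasis : ∀ w : EuclideanSpace ℝ (Fin n),
        w = ∑ i, w i • EuclideanSpace.single i (1:ℝ) := by
      intro w
      have h := (EuclideanSpace.basisFun (Fin n) ℝ).sum_repr w
      simp only [EuclideanSpace.basisFun_apply, EuclideanSpace.basisFun_repr] at h
      exact h.symm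
    have hexp : ∀ y : EuclideanSpace ℝ (Fin n),
        iteratedFDeriv ℝ j g x (fun _ => -y)
          = ∑ v : Fin j → Fin n, (∏ k, (-y) (v k)) •
              iteratedFDeriv ℝ j g x (fun k => EuclideanSpace.single (v k) (1:ℝ)) := by
      intro y
      have h1 : (fun _ : Fin j => -y)
          = fun _ : Fin j => ∑ i, (-y) i • EuclideanSpace.single i (1:ℝ) := by
        funext k; exact hbasis (-y)
      rw [h1]
      rw [(iteratedFDeriv ℝ j g x).map_sum
        (g := fun (_ : Fin j) (i : Fin n) => (-y) i • EuclideanSpace.single i (1:ℝ))]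
      refine Finset.sum_congr rfl fun v _ => ?_
      exact (iteratedFDeriv ℝ j g x).map_smul_univ (fun k => (-y) (v k))
        (fun k => EuclideanSpace.single (v k) (1:ℝ))
    have hintv : ∀ v : Fin j → Fin n, Integrable (fun y : EuclideanSpace ℝ (Fin n) =>
        (moll n φ χ ε y * ∏ k, (-y) (v k)) •
          iteratedFDeriv ℝ j g x (fun k => EuclideanSpace.single (v k) (1:ℝ))) := by
      intro v
      refine Continuous.integrable_of_hasCompactSupport ?_ ?_
      · refine Continuous.smul ?_ continuous_const
        exact hmc.mul (continuous_finset_prod _ fun k _ =>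
          ((EuclideanSpace.proj (v k)).continuous.comp continuous_id).neg)
      · refine HasCompactSupport.intro (hmsupp.isCompact) ?_
        intro y hy
        have hz : moll n φ χ ε y = 0 := by
          by_contra hzz
          exact hy (subset_tsupport _ (Function.mem_support.mpr hzz))
        simp [hz]
    calc (∫ y : EuclideanSpace ℝ (Fin n), moll n φ χ ε y • iteratedFDeriv ℝ j g x (fun _ => -y))
        = ∫ y : EuclideanSpace ℝ (Fin n), ∑ v : Fin j → Fin n,
            (moll n φ χ ε y * ∏ k, (-y) (v k)) • iteratedFDeriv ℝ j g x
              (fun k => EuclideanSpace.single (v k) (1:ℝ)) := by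
          refine integral_congr_ae (Eventually.of_forall fun y => ?_)
          show moll n φ χ ε y • iteratedFDeriv ℝ j g x (fun _ => -y)
            = ∑ v : Fin j → Fin n, (moll n φ χ ε y * ∏ k, (-y) (v k)) •
                iteratedFDeriv ℝ j g x (fun k => EuclideanSpace.single (v k) (1:ℝ))
          rw [hexp y, Finset.smul_sum]
          refine Finset.sum_congr rfl fun v _ => ?_
          rw [smul_smul]
      _ = ∑ v : Fin j → Fin n, ∫ y : EuclideanSpace ℝ (Fin n),
            (moll n φ χ ε y * ∏ k, (-y) (v k)) • iteratedFDeriv ℝ j g x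
              (fun k => EuclideanSpace.single (v k) (1:ℝ)) :=
          integral_finset_sum _ fun v _ => hintv v
      _ = ∑ v : Fin j → Fin n,
          (∫ y : EuclideanSpace ℝ (Fin n), (∏ i, y i ^ (cnt j v i)) * moll n φ χ ε y) •
            ((-1:ℝ)^j • iteratedFDeriv ℝ j g x
              (fun k => EuclideanSpace.single (v k) (1:ℝ))) := by
          refine Finset.sum_congr rfl fun v _ => ?_
          have hsv : ∀ y : EuclideanSpace ℝ (Fin n),
              moll n φ χ ε y * ∏ k, (-y) (v k)
                = (-1:ℝ)^j * ((∏ i, y i ^ (cnt j v i)) * moll n φ χ ε y) := by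
            intro y
            have hneg : ∀ k : Fin j, (-y) (v k) = -(y (v k)) := fun k => rfl
            have h2 : (∏ k, (-y) (v k)) = (-1:ℝ)^j * ∏ k, y (v k) := by
              simp only [hneg]
              rw [show (fun k : Fin j => -(y (v k))) = fun k => (-1:ℝ) * y (v k) by
                funext k; ring]
              rw [Finset.prod_mul_distrib, Finset.prod_const, Finset.card_univ,
                Fintype.card_fin]
            have h3 : (∏ k, y (v k)) = ∏ i, y i ^ (cnt j v i) := by
              rw [Finset.prod_comp (fun i : Fin n => y i) v]
              refine Finset.prod_subset (Finset.subset_univ _) fun i _ hi => ?_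
              have hcard : (Finset.univ.filter fun k => v k = i).card = 0 := by
                rw [Finset.card_eq_zero, Finset.filter_eq_empty_iff]
                intro k _
                intro hvk
                exact hi (Finset.mem_image.mpr ⟨k, Finset.mem_univ k, hvk⟩)
              rw [hcard, pow_zero]
            rw [h2, h3]; ring
          calc (∫ y : EuclideanSpace ℝ (Fin n),
                (moll n φ χ ε y * ∏ k, (-y) (v k)) • iteratedFDeriv ℝ j g x
                  (fun k => EuclideanSpace.single (v k) (1:ℝ)))
              = ∫ y : EuclideanSpace ℝ (Fin n),
                ((∏ i, y i ^ (cnt j v i)) * moll n φ χ ε y) •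
                  ((-1:ℝ)^j • iteratedFDeriv ℝ j g x
                    (fun k => EuclideanSpace.single (v k) (1:ℝ))) := by
                refine integral_congr_ae (Eventually.of_forall fun y => ?_)
                show (moll n φ χ ε y * ∏ k, (-y) (v k)) • iteratedFDeriv ℝ j g x
                    (fun k => EuclideanSpace.single (v k) (1:ℝ))
                  = ((∏ i, y i ^ (cnt j v i)) * moll n φ χ ε y) •
                      ((-1:ℝ)^j • iteratedFDeriv ℝ j g x
                        (fun k => EuclideanSpace.single (v k) (1:ℝ)))
                rw [hsv y, smul_smul]
                congr 1
                ring
            _ = (∫ y : EuclideanSpace ℝ (Fin n), (∏ i, y i ^ (cnt j v i)) * moll n φ χ ε y) •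
                ((-1:ℝ)^j • iteratedFDeriv ℝ j g x
                  (fun k => EuclideanSpace.single (v k) (1:ℝ))) :=
              integral_smul_const _ _
  -- the polynomial part of the integral
  have hPint : (∫ y : EuclideanSpace ℝ (Fin n), moll n φ χ ε y • P y)
      = ∑ j ∈ Finset.range (m+1), (j.factorial : ℝ)⁻¹ •
          ∑ v : Fin j → Fin n,
            (∫ y : EuclideanSpace ℝ (Fin n), (∏ i, y i ^ (cnt j v i)) * moll n φ χ ε y) •
              ((-1:ℝ)^j • iteratedFDeriv ℝ j g x
                (fun k => EuclideanSpace.single (v k) (1:ℝ))) := by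
    have hintj : ∀ j ∈ Finset.range (m+1), Integrable (fun y : EuclideanSpace ℝ (Fin n) =>
        (j.factorial : ℝ)⁻¹ • (moll n φ χ ε y • iteratedFDeriv ℝ j g x (fun _ => -y))) := by
      intro j _
      have hbase : Integrable (fun y : EuclideanSpace ℝ (Fin n) =>
          moll n φ χ ε y • iteratedFDeriv ℝ j g x (fun _ => -y)) :=
        Continuous.integrable_of_hasCompactSupport
          (hmc.smul ((iteratedFDeriv ℝ j g x).cont.comp
            (continuous_pi fun _ => continuous_neg))) hmsupp.smul_right
      exact hbase.smul _
    calc (∫ y : EuclideanSpace ℝ (Fin n), moll n φ χ ε y • P y)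
        = ∫ y : EuclideanSpace ℝ (Fin n), ∑ j ∈ Finset.range (m+1),
            (j.factorial : ℝ)⁻¹ • (moll n φ χ ε y • iteratedFDeriv ℝ j g x (fun _ => -y)) := by
          refine integral_congr_ae (Eventually.of_forall fun y => ?_)
          show moll n φ χ ε y • P y = _
          rw [hP]
          dsimp only
          rw [Finset.smul_sum]
          exact Finset.sum_congr rfl fun j _ => smul_comm _ _ _
      _ = ∑ j ∈ Finset.range (m+1), ∫ y : EuclideanSpace ℝ (Fin n),
            (j.factorial : ℝ)⁻¹ • (moll n φ χ ε y • iteratedFDeriv ℝ j g x (fun _ => -y)) :=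
          integral_finset_sum _ hintj
      _ = ∑ j ∈ Finset.range (m+1), (j.factorial : ℝ)⁻¹ •
          ∑ v : Fin j → Fin n,
            (∫ y : EuclideanSpace ℝ (Fin n), (∏ i, y i ^ (cnt j v i)) * moll n φ χ ε y) •
              ((-1:ℝ)^j • iteratedFDeriv ℝ j g x
                (fun k => EuclideanSpace.single (v k) (1:ℝ))) := by
          refine Finset.sum_congr rfl fun j _ => ?_
          rw [integral_smul, hDj j]
  -- the value g x as the "if" part of the sums
  have hgx : (∑ j ∈ Finset.range (m+1), (j.factorial : ℝ)⁻¹ •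
      ∑ v : Fin j → Fin n, (if (∑ i, cnt j v i) = 0 then (1:ℝ) else 0) •
        ((-1:ℝ)^j • iteratedFDeriv ℝ j g x
          (fun k => EuclideanSpace.single (v k) (1:ℝ)))) = g x := by
    rw [Finset.sum_eq_single_of_mem 0 (Finset.mem_range.mpr (Nat.succ_pos m))]
    · have h0 : ∀ v : Fin 0 → Fin n, (∑ i, cnt 0 v i) = 0 := fun v => hcntsum 0 v
      simp [h0, iteratedFDeriv_zero_apply]
    · intro j _ hjne
      rw [Finset.sum_eq_zero, smul_zero]
      intro v _
      rw [hcntsum j v, if_neg hjne, zero_smul]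
  -- final decomposition
  have hdeco : (∫ y : EuclideanSpace ℝ (Fin n), moll n φ χ ε y • g (x - y)) - g x
      = (∫ y : EuclideanSpace ℝ (Fin n), moll n φ χ ε y • (g (x - y) - P y))
        + ∑ j ∈ Finset.range (m+1), (j.factorial : ℝ)⁻¹ •
            ∑ v : Fin j → Fin n,
              ((∫ y : EuclideanSpace ℝ (Fin n), (∏ i, y i ^ (cnt j v i)) * moll n φ χ ε y)
                - (if (∑ i, cnt j v i) = 0 then (1:ℝ) else 0)) •
              ((-1:ℝ)^j • iteratedFDeriv ℝ j g x
                (fun k => EuclideanSpace.single (v k) (1:ℝ))) := by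
    conv_lhs => rw [hsplit, hPint, ← hgx]
    rw [add_sub_assoc]
    congr 1
    rw [← Finset.sum_sub_distrib]
    refine Finset.sum_congr rfl fun j _ => ?_
    rw [← smul_sub, ← Finset.sum_sub_distrib]
    congr 1
    refine Finset.sum_congr rfl fun v _ => ?_
    rw [← sub_smul]
  rw [hdeco]
  refine (norm_add_le _ _).trans ?_
  have hmainb : ‖∑ j ∈ Finset.range (m+1), (j.factorial : ℝ)⁻¹ •
      ∑ v : Fin j → Fin n,
        ((∫ y : EuclideanSpace ℝ (Fin n), (∏ i, y i ^ (cnt j v i)) * moll n φ χ ε y)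
          - (if (∑ i, cnt j v i) = 0 then (1:ℝ) else 0)) •
        ((-1:ℝ)^j • iteratedFDeriv ℝ j g x
          (fun k => EuclideanSpace.single (v k) (1:ℝ)))‖
      ≤ (∑ j ∈ Finset.range (m+1), (j.factorial : ℝ)⁻¹ *
          ∑ _v : Fin j → Fin n, Cm (cnt j _v) * Mg j) * ε ^ q := by
    rw [Finset.sum_mul]
    refine (norm_sum_le _ _).trans (Finset.sum_le_sum fun j _ => ?_)
    rw [norm_smul, Real.norm_eq_abs, abs_of_nonneg (a := (j.factorial : ℝ)⁻¹) (by positivity)]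
    have hv : ‖∑ v : Fin j → Fin n,
        ((∫ y : EuclideanSpace ℝ (Fin n), (∏ i, y i ^ (cnt j v i)) * moll n φ χ ε y)
          - (if (∑ i, cnt j v i) = 0 then (1:ℝ) else 0)) •
        ((-1:ℝ)^j • iteratedFDeriv ℝ j g x
          (fun k => EuclideanSpace.single (v k) (1:ℝ)))‖
        ≤ ∑ v : Fin j → Fin n, (Cm (cnt j v) * Mg j) * ε ^ q := by
      refine (norm_sum_le _ _).trans (Finset.sum_le_sum fun v _ => ?_)
      rw [norm_smul, Real.norm_eq_abs]
      have h1 := hCmle (cnt j v) ε hε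
      have h2 : ‖(-1:ℝ)^j • iteratedFDeriv ℝ j g x
          (fun k => EuclideanSpace.single (v k) (1:ℝ))‖ ≤ Mg j := by
        rw [norm_smul, Real.norm_eq_abs, abs_pow, abs_neg, abs_one, one_pow, one_mul]
        refine le_trans (ContinuousMultilinearMap.le_opNorm _ _) ?_
        have hone : (∏ k : Fin j, ‖EuclideanSpace.single (v k) (1:ℝ)‖) = 1 := by
          simp [EuclideanSpace.norm_single]
        rw [hone, mul_one]
        exact hMgle j x hx
      calc |(∫ y : EuclideanSpace ℝ (Fin n), (∏ i, y i ^ (cnt j v i)) * moll n φ χ ε y)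
            - (if (∑ i, cnt j v i) = 0 then (1:ℝ) else 0)| *
            ‖(-1:ℝ)^j • iteratedFDeriv ℝ j g x
              (fun k => EuclideanSpace.single (v k) (1:ℝ))‖
          ≤ (Cm (cnt j v) * ε ^ q) * Mg j :=
            mul_le_mul h1 h2 (norm_nonneg _) (mul_nonneg (hCm0 _).le hεq)
        _ = (Cm (cnt j v) * Mg j) * ε ^ q := by ring
    calc (j.factorial : ℝ)⁻¹ * ‖∑ v : Fin j → Fin n,
          ((∫ y : EuclideanSpace ℝ (Fin n), (∏ i, y i ^ (cnt j v i)) * moll n φ χ ε y)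
            - (if (∑ i, cnt j v i) = 0 then (1:ℝ) else 0)) •
          ((-1:ℝ)^j • iteratedFDeriv ℝ j g x
            (fun k => EuclideanSpace.single (v k) (1:ℝ)))‖
        ≤ (j.factorial : ℝ)⁻¹ * ∑ v : Fin j → Fin n, (Cm (cnt j v) * Mg j) * ε ^ q :=
          mul_le_mul_of_nonneg_left hv (by positivity)
      _ = (j.factorial : ℝ)⁻¹ * (∑ _v : Fin j → Fin n, Cm (cnt j _v) * Mg j) * ε ^ q := by
          rw [← Finset.sum_mul]; ring
  calc ‖∫ y : EuclideanSpace ℝ (Fin n), moll n φ χ ε y • (g (x - y) - P y)‖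
        + ‖∑ j ∈ Finset.range (m+1), (j.factorial : ℝ)⁻¹ •
            ∑ v : Fin j → Fin n,
              ((∫ y : EuclideanSpace ℝ (Fin n), (∏ i, y i ^ (cnt j v i)) * moll n φ χ ε y)
                - (if (∑ i, cnt j v i) = 0 then (1:ℝ) else 0)) •
              ((-1:ℝ)^j • iteratedFDeriv ℝ j g x
                (fun k => EuclideanSpace.single (v k) (1:ℝ)))‖
      ≤ (B * M / m.factorial * S) * ε ^ q
        + (∑ j ∈ Finset.range (m+1), (j.factorial : ℝ)⁻¹ *
            ∑ _v : Fin j → Fin n, Cm (cnt j _v) * Mg j) * ε ^ q := add_le_add hRb hmainb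
    _ ≤ Cfin * ε ^ q := by
        rw [hCfin, add_mul, add_mul]
        linarith [hεq]

/-- The main estimate, all orders of derivatives. -/
lemma est_main
    (hφ1 : ∫ x : EuclideanSpace ℝ (Fin n), φ x = 1)
    (hφmom : ∀ α : Fin n → ℕ, 1 ≤ ∑ i, α i →
      ∫ x : EuclideanSpace ℝ (Fin n), (∏ i, x i ^ α i) * φ x = 0)
    (hχsmooth : ContDiff ℝ (⊤ : ℕ∞) χ) (hχsupp : HasCompactSupport χ)
    (hχone : ∀ᶠ y in 𝓝 (0 : EuclideanSpace ℝ (Fin n)), χ y = 1) (k : ℕ) :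
    ∀ {F : Type} [NormedAddCommGroup F] [NormedSpace ℝ F] [CompleteSpace F]
      (g : EuclideanSpace ℝ (Fin n) → F), ContDiff ℝ (⊤ : ℕ∞) g →
      ∀ K : Set (EuclideanSpace ℝ (Fin n)), IsCompact K → ∀ q : ℝ, 0 ≤ q →
      ∃ C : ℝ, 0 < C ∧ ∀ ε ∈ Set.Ioc (0:ℝ) 1, ∀ x ∈ K,
        ‖iteratedFDeriv ℝ k
            (fun x => (∫ y : EuclideanSpace ℝ (Fin n), moll n φ χ ε y • g (x - y)) - g x) x‖
          ≤ C * ε ^ q := by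
  induction k with
  | zero =>
    intro F _ _ _ g hg K hK q hq
    obtain ⟨C, hC, hbd⟩ := est_zero hφ1 hφmom hχsmooth hχsupp hχone hg hK hq
    refine ⟨C, hC, fun ε hε x hx => ?_⟩
    rw [norm_iteratedFDeriv_zero]
    exact hbd ε hε x hx
  | succ k ih =>
    intro F _ _ _ g hg K hK q hq
    have hg' : ContDiff ℝ (⊤ : ℕ∞) (fderiv ℝ g) := hg.fderiv_right (by exact_mod_cast le_top)
    obtain ⟨C, hC, hbd⟩ := ih (fderiv ℝ g) hg' K hK q hq
    refine ⟨C, hC, fun ε hε x hx => ?_⟩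
    have hfd : (fderiv ℝ (fun x =>
          (∫ y : EuclideanSpace ℝ (Fin n), moll n φ χ ε y • g (x - y)) - g x))
        = fun x => (∫ y : EuclideanSpace ℝ (Fin n), moll n φ χ ε y • fderiv ℝ g (x - y))
            - fderiv ℝ g x := by
      funext z
      have h1 := hasFDerivAt_mollified (φ := φ) hχsmooth hχsupp hε hg z
      have h2 := (hg.differentiable (by simp) z).hasFDerivAt
      exact (h1.sub h2).fderiv
    have hkey := norm_iteratedFDeriv_fderiv (𝕜 := ℝ)
      (f := fun x => (∫ y : EuclideanSpace ℝ (Fin n), moll n φ χ ε y • g (x - y)) - g x)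
      (n := k) (x := x)
    rw [← hkey, hfd]
    exact hbd ε hε x hx

end ColombeauAux

open ColombeauAux in
/-- The Colombeau imbedding by convolution with a mollifier with vanishing
higher moments coincides with the constant imbedding on smooth functions:
`ι(f) = σ(f)`, i.e. `(f ⋆ (χ φ_ε)) − f` is a null net. -/
theorem iota_eq_sigma_on_smooth {n : ℕ}
    (φ : SchwartzMap (EuclideanSpace ℝ (Fin n)) ℝ)
    (hφ1 : ∫ x : EuclideanSpace ℝ (Fin n), φ x = 1)
    (hφmom : ∀ α : Fin n → ℕ, 1 ≤ ∑ i, α i →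
      ∫ x : EuclideanSpace ℝ (Fin n), (∏ i, x i ^ α i) * φ x = 0)
    (χ : EuclideanSpace ℝ (Fin n) → ℝ)
    (hχsmooth : ContDiff ℝ (⊤ : ℕ∞) χ) (hχsupp : HasCompactSupport χ)
    (hχone : ∀ᶠ y in 𝓝 (0 : EuclideanSpace ℝ (Fin n)), χ y = 1)
    (f : EuclideanSpace ℝ (Fin n) → ℝ) (hf : ContDiff ℝ (⊤ : ℕ∞) f)
    (u : ℝ → EuclideanSpace ℝ (Fin n) → ℝ)
    (hudef : ∀ ε ∈ Set.Ioc (0:ℝ) 1, ∀ x : EuclideanSpace ℝ (Fin n),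
      u ε x = ∫ y : EuclideanSpace ℝ (Fin n),
        f (x - y) * (χ y * ((ε ^ n)⁻¹ * φ (ε⁻¹ • y)))) :
    NullNet (fun ε x => u ε x - f x) := by
  have hueq : ∀ ε ∈ Set.Ioc (0:ℝ) 1, u ε = fun x =>
      ∫ y : EuclideanSpace ℝ (Fin n), moll n φ χ ε y • f (x - y) := by
    intro ε hε
    funext x
    rw [hudef ε hε x]
    refine integral_congr_ae (Eventually.of_forall fun y => ?_)
    simp [moll, smul_eq_mul, mul_comm]
  constructor
  · intro ε hε
    have hms : ContDiff ℝ (⊤ : ℕ∞) (moll n φ χ ε) := moll_smooth hχsmooth ε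
    have hmsupp := moll_compactSupport (φ := φ) hχsupp ε
    have hconv : u ε = MeasureTheory.convolution (moll n φ χ ε) f
        (ContinuousLinearMap.mul ℝ ℝ) volume := by
      funext x
      rw [hudef ε hε x, MeasureTheory.convolution_def]
      refine integral_congr_ae (Eventually.of_forall fun y => ?_)
      simp [moll, mul_comm, mul_assoc, mul_left_comm]
    have hcd : ContDiff ℝ (⊤ : ℕ∞) (u ε) := by
      rw [hconv]
      exact hmsupp.contDiff_convolution_left _ hms hf.continuous.locallyIntegrable
    exact hcd.sub hf
  · intro K hK k q hq
    obtain ⟨C, hC, hest⟩ := est_main hφ1 hφmom hχsmooth hχsupp hχone k f hf K hK q hq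
    refine ⟨C, hC, 1, one_pos, fun ε hε _ x hx => ?_⟩
    have : (fun x => u ε x - f x)
        = fun x => (∫ y : EuclideanSpace ℝ (Fin n), moll n φ χ ε y • f (x - y)) - f x := by
      funext z; rw [hueq ε hε]
    show ‖iteratedFDeriv ℝ k (fun x => u ε x - f x) x‖ ≤ C * ε ^ q
    rw [this]
    exact hest ε hε x hx
end
end
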